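/- arXiv:1210.8062 — 3 statements merged into one kernel-verified Lean document; each statement's English description precedes it below -/
import Mathlib

section
/- Let Q be a positive real number and let A_n be the (n+1)×(n+1) matrix with entries (A_n)_{i,i+1} = n - i for i = 0,...,n-1, (A_n)_{i+1,i} = (i+1)Q for i = 0,...,n-1, and all other entries zero (indices from 0 to n). Then the eigenvalues of A_n are exactly { (n - 2j)·√Q : j = 0, 1, ..., n }. -/
open Polynomial

noncomputable def pab (a b : ℕ) : Polynomial ℝ := (1 + X)^a * (1 - X)^b

noncomputable def cc (a b i : ℕ) : ℝ := (pab a b).coeff i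

lemma hder1 (a : ℕ) : (1 + X) * derivative ((1 + X : ℝ[X])^a) = (a : ℝ[X]) * (1 + X)^a := by
  rw [derivative_pow]
  cases a with
  | zero => simp
  | succ k =>
      simp only [derivative_add, derivative_one, derivative_X, zero_add, mul_one,
        Nat.add_sub_cancel]
      rw [pow_succ]
      push_cast
      simp only [map_add, C_1, C_eq_natCast]
      ring

lemma hder2 (b : ℕ) : (1 - X) * derivative ((1 - X : ℝ[X])^b) = -(b : ℝ[X]) * (1 - X)^b := by
  rw [derivative_pow]
  cases b with
  | zero => simp
  | succ k =>
      simp only [derivative_sub, derivative_one, derivative_X, zero_sub, mul_neg, mul_one,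
        Nat.add_sub_cancel]
      rw [pow_succ]
      push_cast
      simp only [map_add, C_1, C_eq_natCast]
      ring

lemma keyident (a b : ℕ) :
    (1 - X^2) * derivative (pab a b) =
      ((a : ℝ[X]) * (1 - X) - (b : ℝ[X]) * (1 + X)) * pab a b := by
  have h : (1 - X^2 : ℝ[X]) = (1 - X) * (1 + X) := by ring
  rw [pab, derivative_mul, h]
  have e1 : (1 - X) * (1 + X) * (derivative ((1 + X:ℝ[X]) ^ a) * (1 - X) ^ b)
      = (1 - X) * ((1 + X) * derivative ((1 + X:ℝ[X]) ^ a)) * (1 - X) ^ b := by ring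
  have e2 : (1 - X) * (1 + X) * ((1 + X:ℝ[X]) ^ a * derivative ((1 - X:ℝ[X]) ^ b))
      = (1 + X) * ((1 - X) * derivative ((1 - X:ℝ[X]) ^ b)) * (1 + X) ^ a := by ring
  rw [mul_add, e1, e2, hder1, hder2]
  ring

lemma keyident2 (a b : ℕ) :
    derivative (pab a b) = ((a:ℝ[X]) - (b:ℝ[X])) * pab a b - ((a:ℝ[X]) + (b:ℝ[X])) * (X * pab a b)
      + X^2 * derivative (pab a b) := by
  linear_combination keyident a b

lemma natcast_sub_C (a b : ℕ) : ((a:ℝ[X]) - (b:ℝ[X])) = C ((a:ℝ) - b) := by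
  push_cast
  simp [map_sub]

lemma natcast_add_C (a b : ℕ) : ((a:ℝ[X]) + (b:ℝ[X])) = C ((a:ℝ) + b) := by
  push_cast
  simp [map_add]

lemma aux_x2 (a b m : ℕ) :
    (X^2 * derivative (pab a b)).coeff (m+1) = (m:ℝ) * cc a b m := by
  cases m with
  | zero => rw [coeff_X_pow_mul']; norm_num
  | succ k =>
      have : k + 1 + 1 = k + 2 := by ring
      rw [this, coeff_X_pow_mul (derivative (pab a b)) 2 k, coeff_derivative]
      unfold cc
      push_cast
      ring

lemma cc_rec (a b m : ℕ) :
    ((m:ℝ) + 2) * cc a b (m+2) + (((a:ℝ) + b) - m) * cc a b m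
      = ((a:ℝ) - b) * cc a b (m+1) := by
  have h := congrArg (fun q : ℝ[X] => q.coeff (m+1)) (keyident2 a b)
  simp only [coeff_add, coeff_sub, natcast_sub_C, natcast_add_C, coeff_C_mul,
    coeff_derivative, coeff_X_mul, aux_x2] at h
  unfold cc at *
  push_cast at h ⊢
  linarith [h]

lemma cc_zero (a b : ℕ) : cc a b 0 = 1 := by
  unfold cc pab
  rw [coeff_zero_eq_eval_zero]
  simp

lemma cc_one (a b : ℕ) : cc a b 1 = (a:ℝ) - b := by
  have h := congrArg (fun q : ℝ[X] => q.coeff 0) (keyident2 a b)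
  simp only [coeff_add, coeff_sub, natcast_sub_C, natcast_add_C, coeff_C_mul,
    coeff_derivative, mul_coeff_zero, coeff_X_zero, zero_mul, coeff_X_pow_mul'] at h
  have h0 := cc_zero a b
  unfold cc at h0 ⊢
  rw [h0, mul_one] at h
  simp only [coeff_C_zero, coeff_X_pow] at h
  norm_num at h
  exact h

lemma cc_top (a b k : ℕ) (hk : a + b < k) : cc a b k = 0 := by
  unfold cc
  apply coeff_eq_zero_of_natDegree_lt
  calc (pab a b).natDegree ≤ ((1+X:ℝ[X])^a).natDegree + ((1-X:ℝ[X])^b).natDegree :=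
        natDegree_mul_le
    _ ≤ a * (1+X:ℝ[X]).natDegree + b * (1-X:ℝ[X]).natDegree :=
        Nat.add_le_add (natDegree_pow_le) (natDegree_pow_le)
    _ ≤ a * 1 + b * 1 := by
        apply Nat.add_le_add <;> apply Nat.mul_le_mul_left
        · exact (natDegree_add_le _ _).trans (by simp)
        · exact (natDegree_sub_le _ _).trans (by simp)
    _ < k := by omega

noncomputable def vv (n j : ℕ) (q : ℝ) (k : ℕ) : ℝ := q^k * cc (n-j) j k / (n.choose k)

lemma S1 (n j i : ℕ) (hj : j ≤ n) (hi : i ≤ n) :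
    ((n:ℝ) - i) * (cc (n-j) j (i+1) / (n.choose (i+1)))
      = ((i:ℝ) + 1) * (cc (n-j) j (i+1) / (n.choose i)) := by
  rcases eq_or_lt_of_le hi with rfl | hlt
  · rw [cc_top (i-j) j (i+1) (by omega)]
    simp
  · have h1 : (0:ℝ) < n.choose i := by exact_mod_cast Nat.choose_pos hi
    have h2 : (0:ℝ) < n.choose (i+1) := by exact_mod_cast Nat.choose_pos hlt
    have key : (n.choose (i+1) : ℝ) * ((i:ℝ)+1) = (n.choose i : ℝ) * ((n:ℝ) - i) := by
      have h := Nat.choose_succ_right_eq n i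
      have h3 : ((n.choose (i+1) * (i+1) : ℕ) : ℝ) = ((n.choose i * (n-i) : ℕ):ℝ) := by
        exact_mod_cast congrArg (Nat.cast : ℕ → ℝ) h
      push_cast [Nat.cast_sub hi] at h3
      linarith
    rw [mul_div_assoc', mul_div_assoc', div_eq_div_iff (ne_of_gt h2) (ne_of_gt h1)]
    linear_combination (-(cc (n-j) j (i+1))) * key

lemma S2 (n j i : ℕ) (hj : j ≤ n) (h1 : 1 ≤ i) (hi : i ≤ n) :
    (i:ℝ) * (cc (n-j) j (i-1) / (n.choose (i-1)))
      = ((n:ℝ) - i + 1) * (cc (n-j) j (i-1) / (n.choose i)) := by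
  have hA : (0:ℝ) < n.choose (i-1) := by exact_mod_cast Nat.choose_pos (by omega)
  have hB : (0:ℝ) < n.choose i := by exact_mod_cast Nat.choose_pos hi
  have key : (n.choose (i-1):ℝ) * ((n:ℝ) - i + 1) = (n.choose i : ℝ) * i := by
    have h := Nat.choose_succ_right_eq n (i-1)
    rw [show i - 1 + 1 = i from by omega] at h
    have h3 : ((n.choose i * i : ℕ):ℝ) = ((n.choose (i-1) * (n - (i-1)) : ℕ):ℝ) := by
      exact_mod_cast congrArg (Nat.cast : ℕ → ℝ) h
    push_cast [Nat.cast_sub (show i-1 ≤ n by omega), Nat.cast_sub h1] at h3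
    linarith
  rw [mul_div_assoc', mul_div_assoc', div_eq_div_iff (ne_of_gt hA) (ne_of_gt hB)]
  linear_combination (-(cc (n-j) j (i-1))) * key

lemma scalar_id (n j : ℕ) (hj : j ≤ n) (q : ℝ) (i : ℕ) (hi : i ≤ n) :
    ((n:ℝ) - i) * vv n j q (i+1) + (i:ℝ) * q^2 * vv n j q (i-1)
      = ((n:ℝ) - 2*j) * q * vv n j q i := by
  have hcast : ((n - j : ℕ) : ℝ) = (n:ℝ) - j := Nat.cast_sub hj
  rcases Nat.eq_zero_or_pos i with rfl | hpos
  · -- i = 0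
    simp only [vv, Nat.cast_zero, zero_mul, sub_zero, add_zero, pow_zero, pow_one,
      Nat.choose_zero_right, Nat.cast_one, cc_zero, Nat.choose_one_right, cc_one,
      mul_zero, zero_add]
    rcases Nat.eq_zero_or_pos n with rfl | hn
    · have hj0 : j = 0 := by omega
      subst hj0
      norm_num
    · have hn' : (0:ℝ) < n := by exact_mod_cast hn
      rw [hcast]
      field_simp
      ring
  · -- i ≥ 1
    have e2 : q^2 * q^(i-1) = q^(i+1) := by
      rw [← pow_add]
      congr 1
      omega
    have hm : i - 1 + 2 = i + 1 := by omega
    have hm1 : i - 1 + 1 = i := by omega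
    have hrec := cc_rec (n-j) j (i-1)
    rw [hm, hm1, hcast] at hrec
    have hcast2 : ((i - 1 : ℕ) : ℝ) = (i:ℝ) - 1 := by
      rw [Nat.cast_sub hpos]
      norm_num
    rw [hcast2] at hrec
    -- hrec : ((i:ℝ) - 1 + 2) * cc (i+1) + ((n - j + j) - (i - 1)) * cc (i-1) = ((n-j) - j) * cc i
    have hBi : (0:ℝ) < n.choose i := by exact_mod_cast Nat.choose_pos hi
    simp only [vv]
    have L1 := S1 n j i hj hi
    have L2 := S2 n j i hj hpos hi
    have expand : ((n:ℝ) - i) * (q ^ (i+1) * cc (n-j) j (i+1) / (n.choose (i+1)))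
        + (i:ℝ) * q^2 * (q^(i-1) * cc (n-j) j (i-1) / (n.choose (i-1)))
        = q^(i+1) * (((n:ℝ) - i) * (cc (n-j) j (i+1) / (n.choose (i+1)))
            + (i:ℝ) * (cc (n-j) j (i-1) / (n.choose (i-1)))) := by
      rw [← e2]
      ring
    rw [expand, L1, L2]
    have goalr : ((n:ℝ) - 2*j) * q * (q ^ i * cc (n-j) j i / (n.choose i))
        = q^(i+1) * (((n:ℝ) - 2*j) * cc (n-j) j i / (n.choose i)) := by
      rw [pow_succ]
      ring
    rw [goalr]
    congr 1
    field_simp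
    linear_combination hrec

lemma sum_if {n : ℕ} (m : ℕ) (f : Fin (n+1) → ℝ) :
    (∑ k : Fin (n+1), if (k:ℕ) = m then f k else 0)
      = if h : m < n+1 then f ⟨m, h⟩ else 0 := by
  split_ifs with h
  · rw [Finset.sum_eq_single ⟨m, h⟩]
    · simp
    · intro b _ hb
      rw [if_neg]
      intro hbm
      exact hb (Fin.ext hbm)
    · intro hmem
      exact absurd (Finset.mem_univ _) hmem
  · apply Finset.sum_eq_zero
    intro k _
    rw [if_neg]
    intro hk
    exact h (hk ▸ k.isLt)

lemma mulvec_eq (n : ℕ) (Q : ℝ)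
    (A : Matrix (Fin (n + 1)) (Fin (n + 1)) ℝ)
    (hA : ∀ i j : Fin (n + 1),
      A i j =
        if (j : ℕ) = (i : ℕ) + 1 then (n : ℝ) - (i : ℕ)
        else if (i : ℕ) = (j : ℕ) + 1 then ((i : ℕ) : ℝ) * Q
        else 0)
    (w : ℕ → ℝ) (i : Fin (n+1)) :
    A.mulVec (fun k => w k.val) i
      = ((n:ℝ) - (i:ℕ)) * w ((i:ℕ) + 1) + ((i:ℕ):ℝ) * Q * w ((i:ℕ) - 1) := by
  have hsplit : ∀ k : Fin (n+1), A i k * w k.val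
      = (if (k:ℕ) = (i:ℕ)+1 then ((n:ℝ) - (i:ℕ)) * w k.val else 0)
        + (if (k:ℕ) = (i:ℕ) - 1 ∧ 1 ≤ (i:ℕ) then ((i:ℕ):ℝ) * Q * w k.val else 0) := by
    intro k
    rw [hA]
    split_ifs <;> first | ring1 | (exfalso; omega)
  have hmv : A.mulVec (fun k => w k.val) i = ∑ k, A i k * w k.val := by
    simp [Matrix.mulVec, dotProduct]
  rw [hmv, Finset.sum_congr rfl (fun k _ => hsplit k), Finset.sum_add_distrib]
  congr 1
  · rw [sum_if ((i:ℕ)+1) (fun k => ((n:ℝ) - (i:ℕ)) * w k.val)]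
    split_ifs with h
    · rfl
    · have : (i:ℕ) = n := by omega
      rw [this]
      simp
  · by_cases hp : 1 ≤ (i:ℕ)
    · have : ∀ k : Fin (n+1), (if (k:ℕ) = (i:ℕ) - 1 ∧ 1 ≤ (i:ℕ) then ((i:ℕ):ℝ) * Q * w k.val else 0)
          = (if (k:ℕ) = (i:ℕ) - 1 then ((i:ℕ):ℝ) * Q * w k.val else 0) := by
        intro k
        simp [hp]
      rw [Finset.sum_congr rfl (fun k _ => this k),
        sum_if ((i:ℕ)-1) (fun k => ((i:ℕ):ℝ) * Q * w k.val)]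
      rw [dif_pos (by omega)]
    · have hi0 : (i:ℕ) = 0 := by omega
      rw [Finset.sum_eq_zero (fun k _ => by rw [if_neg]; omega)]
      rw [hi0]
      simp

lemma vv_zero_val (n j : ℕ) (q : ℝ) : vv n j q 0 = 1 := by
  simp [vv, cc_zero]

lemma vv_ne (n j : ℕ) (q : ℝ) : (fun k : Fin (n+1) => vv n j q k.val) ≠ 0 := by
  intro h
  have h0 := congrFun h 0
  rw [show ((0 : Fin (n+1)) : ℕ) = 0 from rfl] at h0
  rw [vv_zero_val] at h0
  exact one_ne_zero h0

lemma eigen (n j : ℕ) (hj : j ≤ n) (Q : ℝ) (hQ : 0 < Q)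
    (A : Matrix (Fin (n + 1)) (Fin (n + 1)) ℝ)
    (hA : ∀ i j : Fin (n + 1),
      A i j =
        if (j : ℕ) = (i : ℕ) + 1 then (n : ℝ) - (i : ℕ)
        else if (i : ℕ) = (j : ℕ) + 1 then ((i : ℕ) : ℝ) * Q
        else 0) :
    A.mulVec (fun k : Fin (n+1) => vv n j (Real.sqrt Q) k.val)
      = (((n:ℝ) - 2*j) * Real.sqrt Q) • (fun k : Fin (n+1) => vv n j (Real.sqrt Q) k.val) := by
  funext i
  rw [mulvec_eq n Q A hA (vv n j (Real.sqrt Q)) i]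
  have hs := scalar_id n j hj (Real.sqrt Q) (i:ℕ) (by omega)
  rw [Real.sq_sqrt hQ.le] at hs
  simpa using hs


/-- The eigenvalues of the tridiagonal matrix `A_n` with superdiagonal
`n, n-1, …, 1` and subdiagonal `Q, 2Q, …, nQ` (for `Q > 0`) are exactly
`(n - 2j)√Q` for `j = 0, …, n`. -/
theorem stmt0 (n : ℕ) (Q : ℝ) (hQ : 0 < Q)
    (A : Matrix (Fin (n + 1)) (Fin (n + 1)) ℝ)
    (hA : ∀ i j : Fin (n + 1),
      A i j =
        if (j : ℕ) = (i : ℕ) + 1 then (n : ℝ) - (i : ℕ)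
        else if (i : ℕ) = (j : ℕ) + 1 then ((i : ℕ) : ℝ) * Q
        else 0) :
    {μ : ℝ | ∃ v : Fin (n + 1) → ℝ, v ≠ 0 ∧ A.mulVec v = μ • v} =
      {μ : ℝ | ∃ j : Fin (n + 1), μ = ((n : ℝ) - 2 * (j : ℕ)) * Real.sqrt Q} := by
  have hq : 0 < Real.sqrt Q := Real.sqrt_pos.mpr hQ
  ext μ
  simp only [Set.mem_setOf_eq]
  constructor
  · rintro ⟨v, hv0, hveq⟩
    by_contra hcon
    push_neg at hcon
    set f : Module.End ℝ (Fin (n+1) → ℝ) := Matrix.mulVecLin A with hf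
    set μf : Option (Fin (n+1)) → ℝ :=
      fun o => o.elim μ (fun j => ((n:ℝ) - 2*(j:ℕ)) * Real.sqrt Q) with hμf
    set vf : Option (Fin (n+1)) → (Fin (n+1) → ℝ) :=
      fun o => o.elim v (fun j => fun k => vv n (j:ℕ) (Real.sqrt Q) k.val) with hvf
    have hinj : Function.Injective μf := by
      intro o1 o2 h
      match o1, o2 with
      | none, none => rfl
      | none, some j => exact absurd h (hcon j)
      | some j, none => exact absurd h.symm (hcon j)
      | some j1, some j2 =>
          have h1 : ((n:ℝ) - 2*(j1:ℕ)) = (n:ℝ) - 2*(j2:ℕ) :=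
            mul_right_cancel₀ (ne_of_gt hq) h
          have h2 : ((j1:ℕ):ℝ) = ((j2:ℕ):ℝ) := by linarith
          have h3 : (j1:ℕ) = (j2:ℕ) := by exact_mod_cast h2
          exact congrArg some (Fin.ext h3)
    have heig : ∀ o, f.HasEigenvector (μf o) (vf o) := by
      intro o
      match o with
      | none =>
          refine ⟨?_, hv0⟩
          rw [Module.End.mem_eigenspace_iff, hf, Matrix.mulVecLin_apply]
          exact hveq
      | some j =>
          refine ⟨?_, vv_ne n (j:ℕ) (Real.sqrt Q)⟩
          rw [Module.End.mem_eigenspace_iff, hf, Matrix.mulVecLin_apply]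
          exact eigen n (j:ℕ) (by omega) Q hQ A hA
    have hLI := f.eigenvectors_linearIndependent' μf hinj vf heig
    have hcard := hLI.fintype_card_le_finrank
    rw [Module.finrank_fin_fun] at hcard
    simp only [Fintype.card_option, Fintype.card_fin] at hcard
    omega
  · rintro ⟨j, rfl⟩
    exact ⟨fun k : Fin (n+1) => vv n (j:ℕ) (Real.sqrt Q) k.val,
      vv_ne n (j:ℕ) (Real.sqrt Q), eigen n (j:ℕ) (by omega) Q hQ A hA⟩
end

section
/- Let M be the operator on the free commutative polynomial Fock space ℱ[ℙ¹] defined by M = Σ_{k>0} α_{-k}[p] α_k[p] + Q · Σ_{k>0} α_{-k}[u] α_k[u], where the operators satisfy [α_k[u], α_l[p]] = k δ_{k+l,0} and all other commutators vanish. Then on the finite-dimensional subspace of energy s (spanned by basis vectors |μ, ν⟩ with |μ| + |ν| = s), the eigenvalues of M are exactly { (|μ| - |ν|)·√Q : |μ| + |ν| = s }, counted over all ordered pairs of partitions (μ, ν) with |μ| + |ν| = s. -/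
noncomputable section

/-- The size `|μ|` of a partition recorded as a multiset of positive parts. -/
def wt (μ : Multiset ℕ+) : ℕ := (μ.map (fun a => (a : ℕ))).sum

/-- The Fock space `ℱ[ℙ¹]`, with basis `|μ,ν⟩` indexed by ordered pairs of
partitions. -/
abbrev FockP1 : Type := (Multiset ℕ+ × Multiset ℕ+) →₀ ℝ

/-- Action on the basis vector `|μ,ν⟩` of the operator
`M = Σ_{k>0} α_{-k}[p]α_k[p] + Q Σ_{k>0} α_{-k}[u]α_k[u]`, where the modes
satisfy `[α_k[u], α_l[p]] = k δ_{k+l,0}` (all other commutators vanishing):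
`M|μ,ν⟩ = Σ_k k·(count of k in μ)·|μ∖k, ν∪k⟩ + Q Σ_k k·(count of k in ν)·|μ∪k, ν∖k⟩`. -/
def msStep (Q : ℝ) (x : Multiset ℕ+ × Multiset ℕ+) : FockP1 :=
  (∑ k ∈ x.1.toFinset, (((k : ℕ) : ℝ) * (x.1.count k : ℕ)) •
      Finsupp.single (x.1.erase k, k ::ₘ x.2) (1 : ℝ))
  + Q • ∑ k ∈ x.2.toFinset, (((k : ℕ) : ℝ) * (x.2.count k : ℕ)) •
      Finsupp.single (k ::ₘ x.1, x.2.erase k) (1 : ℝ)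

/-- The operator `M_S(0,Q)` on `ℱ[ℙ¹]`. -/
def MS (Q : ℝ) : FockP1 →ₗ[ℝ] FockP1 :=
  Finsupp.lift FockP1 ℝ (Multiset ℕ+ × Multiset ℕ+) (msStep Q)

namespace Stmt8Aux

open Polynomial Finset

/-- Coefficients of `(1+X)^a (1-X)^b`. -/
def w (a b j : ℕ) : ℝ := (((1 + Polynomial.X) ^ a * (1 - Polynomial.X) ^ b : Polynomial ℝ)).coeff j

lemma w_zero (a b : ℕ) : w a b 0 = 1 := by
  simp [w, Polynomial.coeff_zero_eq_eval_zero]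

lemma w_eq_zero (a b j : ℕ) (h : a + b < j) : w a b j = 0 := by
  apply Polynomial.coeff_eq_zero_of_natDegree_lt
  calc ((1 + Polynomial.X) ^ a * (1 - Polynomial.X) ^ b : Polynomial ℝ).natDegree
      ≤ ((1 + Polynomial.X :Polynomial ℝ) ^ a).natDegree + ((1 - Polynomial.X:Polynomial ℝ) ^ b).natDegree := Polynomial.natDegree_mul_le
    _ ≤ a * 1 + b * 1 := by
        gcongr
        · exact Polynomial.natDegree_pow_le_of_le a (by
            simpa using Polynomial.natDegree_add_le (1:Polynomial ℝ) Polynomial.X)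
        · exact Polynomial.natDegree_pow_le_of_le b (by
            simpa using Polynomial.natDegree_sub_le (1:Polynomial ℝ) Polynomial.X)
    _ < j := by omega

lemma hu_lem (a : ℕ) : (1 + X) * derivative ((1 + X) ^ a : ℝ[X]) = C (a:ℝ) * (1 + X) ^ a := by
  cases a with
  | zero => simp
  | succ n =>
    rw [Polynomial.derivative_pow]
    simp only [Nat.add_sub_cancel]
    rw [derivative_add, derivative_one, derivative_X]
    push_cast
    ring

lemma hv_lem (b : ℕ) : (1 - X) * derivative ((1 - X) ^ b : ℝ[X]) = -(C (b:ℝ)) * (1 - X) ^ b := by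
  cases b with
  | zero => simp
  | succ n =>
    rw [Polynomial.derivative_pow]
    simp only [Nat.add_sub_cancel]
    rw [derivative_sub, derivative_one, derivative_X]
    push_cast
    ring

lemma w_poly_id (a b : ℕ) :
    Polynomial.derivative ((1 + Polynomial.X) ^ a * (1 - Polynomial.X) ^ b : Polynomial ℝ)
      = (Polynomial.C (a : ℝ) - Polynomial.C (b : ℝ)) *
          ((1 + Polynomial.X) ^ a * (1 - Polynomial.X) ^ b)
        - (Polynomial.C (a : ℝ) + Polynomial.C (b : ℝ)) *
          (Polynomial.X * ((1 + Polynomial.X) ^ a * (1 - Polynomial.X) ^ b))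
        + Polynomial.X ^ 2 *
          Polynomial.derivative ((1 + Polynomial.X) ^ a * (1 - Polynomial.X) ^ b) := by
  have key : (1 - X) * ((1 + X) * derivative ((1 + X) ^ a * (1 - X) ^ b : ℝ[X]))
      = (C (a:ℝ) - C (b:ℝ)) * ((1 + X) ^ a * (1 - X) ^ b)
        - (C (a:ℝ) + C (b:ℝ)) * (X * ((1 + X) ^ a * (1 - X) ^ b)) := by
    rw [derivative_mul]
    linear_combination ((1 - X) * (1 - X) ^ b) * hu_lem a + ((1 + X) * (1 + X) ^ a) * hv_lem b
  linear_combination key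

lemma coeff_X2_mul (q : ℝ[X]) (n : ℕ) :
    (X ^ 2 * q).coeff n = if 2 ≤ n then q.coeff (n - 2) else 0 := by
  rw [Polynomial.coeff_X_pow_mul']

lemma w_rec0 (a b : ℕ) : w a b 1 = ((a : ℝ) - b) * w a b 0 := by
  have h := congrArg (fun p => Polynomial.coeff p 0) (w_poly_id a b)
  simp only [sub_mul, add_mul, Polynomial.coeff_add, Polynomial.coeff_sub,
    Polynomial.coeff_derivative, coeff_X2_mul, Polynomial.coeff_C_mul,
    Polynomial.mul_coeff_zero, Polynomial.coeff_X_zero] at h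
  simp only [w, Polynomial.mul_coeff_zero]
  push_cast at h
  norm_num at h
  linear_combination h

lemma w_recS (a b i : ℕ) :
    ((i : ℝ) + 2) * w a b (i + 2) + (((a : ℝ) + b) - i) * w a b i
      = ((a : ℝ) - b) * w a b (i + 1) := by
  have h := congrArg (fun p => Polynomial.coeff p (i + 1)) (w_poly_id a b)
  simp only [sub_mul, add_mul, Polynomial.coeff_add, Polynomial.coeff_sub,
    Polynomial.coeff_derivative, coeff_X2_mul, Polynomial.coeff_C_mul,
    Polynomial.coeff_X_mul] at h
  simp only [w, Polynomial.mul_coeff_zero]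
  cases i with
  | zero =>
    norm_num at h
    push_cast
    linear_combination h + ((a:ℝ) + b) * Polynomial.mul_coeff_zero ((1+X)^a : ℝ[X]) ((1-X)^b)
  | succ n =>
    have h2 : 2 ≤ n + 1 + 1 := by omega
    rw [if_pos h2] at h
    have h3 : n + 1 + 1 - 2 = n := by omega
    rw [h3] at h
    push_cast at h ⊢
    linear_combination h


lemma exists_d (m t : ℕ) (ht : t ≤ m) :
    ∃ d : ℕ → ℝ, ∀ j, (∑ a ∈ Finset.range (m + 1), d a * w a (m - a) j)
      = if j = t then 1 else 0 := by
  set v : Fin (m+1) → ℝ[X] := fun a => (1+X)^(a:ℕ) * (1-X)^(m-(a:ℕ)) with hv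
  have e1 : ((1+X) - (1-X) : ℝ[X]) = C 2 * X := by
    have h2 : (C (2:ℝ)) = 2 := map_ofNat C 2
    rw [h2]; ring
  have e2 : ((1+X) + (1-X) : ℝ[X]) = C 2 := by
    have h2 : (C (2:ℝ)) = 2 := map_ofNat C 2
    rw [h2]; ring
  have e3 : C ((2:ℝ)^m)⁻¹ * ((C (2:ℝ) * X)^t * (C (2:ℝ))^(m-t)) = X ^ t := by
    rw [mul_pow, ← map_pow, ← map_pow]
    have h4 : C ((2:ℝ)^m)⁻¹ * (C ((2:ℝ)^t) * X^t * C ((2:ℝ)^(m-t)))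
        = C (((2:ℝ)^m)⁻¹ * ((2:ℝ)^t * (2:ℝ)^(m-t))) * X^t := by
      rw [map_mul, map_mul]; ring
    rw [h4]
    have h5 : ((2:ℝ)^m)⁻¹ * ((2:ℝ)^t * (2:ℝ)^(m-t)) = 1 := by
      rw [← pow_add]
      have h6 : t + (m - t) = m := by omega
      rw [h6]
      field_simp
    rw [h5, map_one, one_mul]
  have hskey : (X:ℝ[X])^t = C ((2:ℝ)^m)⁻¹ * (((1+X) - (1-X))^t * ((1+X) + (1-X))^(m-t)) := by
    rw [e1, e2]; exact e3.symm
  have expand : (((1+X) - (1-X) : ℝ[X]))^t * ((1+X) + (1-X))^(m-t)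
      = ∑ i ∈ Finset.range (t+1), ∑ l ∈ Finset.range (m-t+1),
          (C ((-1:ℝ)^(t-i) * (t.choose i) * ((m-t).choose l))) *
            ((1+X)^(i+l) * (1-X)^(m-(i+l))) := by
    rw [sub_eq_add_neg, add_pow, add_pow, Finset.sum_mul_sum]
    apply Finset.sum_congr rfl
    intro i hi
    apply Finset.sum_congr rfl
    intro l hl
    have hi' : i ≤ t := Nat.lt_succ_iff.mp (Finset.mem_range.mp hi)
    have hl' : l ≤ m - t := Nat.lt_succ_iff.mp (Finset.mem_range.mp hl)
    have hexp : m - (i+l) = (t-i) + (m-t-l) := by omega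
    rw [neg_pow, hexp]
    simp only [map_mul, map_pow, map_neg, map_one, map_natCast]
    rw [pow_add ((1:ℝ[X])-X), pow_add ((1:ℝ[X])+X)]
    ring
  have hspan : (X:ℝ[X])^t ∈ Submodule.span ℝ (Set.range v) := by
    rw [hskey, expand, Finset.mul_sum]
    apply Submodule.sum_mem
    intro i hi
    rw [Finset.mul_sum]
    apply Submodule.sum_mem
    intro l hl
    have hil : i + l < m + 1 := by
      have hi' : i ≤ t := Nat.lt_succ_iff.mp (Finset.mem_range.mp hi)
      have hl' : l ≤ m - t := Nat.lt_succ_iff.mp (Finset.mem_range.mp hl)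
      omega
    have hterm : (C ((2:ℝ)^m)⁻¹ * (C ((-1:ℝ)^(t-i) * (t.choose i) * ((m-t).choose l)) *
        ((1+X)^(i+l) * (1-X)^(m-(i+l)))))
        = ((((2:ℝ)^m)⁻¹ * ((-1:ℝ)^(t-i) * (t.choose i) * ((m-t).choose l)))) • v ⟨i+l, hil⟩ := by
      rw [Polynomial.smul_eq_C_mul, hv, ← mul_assoc, ← map_mul]
    rw [hterm]
    exact Submodule.smul_mem _ _ (Submodule.subset_span ⟨⟨i+l, hil⟩, rfl⟩)
  rw [Submodule.mem_span_range_iff_exists_fun] at hspan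
  obtain ⟨c, hc⟩ := hspan
  refine ⟨fun a => if h : a < m + 1 then c ⟨a, h⟩ else 0, fun j => ?_⟩
  have hcoeff := congrArg (fun p => p.coeff j) hc
  simp only [Polynomial.finset_sum_coeff, Polynomial.coeff_smul, smul_eq_mul,
    Polynomial.coeff_X_pow] at hcoeff
  rw [← Fin.sum_univ_eq_sum_range (fun a => (if h : a < m + 1 then c ⟨a, h⟩ else 0) * w a (m - a) j)]
  have hterm : ∀ a : Fin (m+1), (if h : (a:ℕ) < m + 1 then c ⟨a, h⟩ else 0) * w ↑a (m - ↑a) j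
      = c a * (v a).coeff j := by
    intro a
    rw [dif_pos a.isLt]
    simp [w, hv]
  simp only [hterm]
  rw [hcoeff]

noncomputable def g (Q : ℝ) (a m j : ℕ) : ℝ := Real.sqrt Q ^ j * w a (m - a) j

lemma g_zero (Q : ℝ) (a m : ℕ) : g Q a m 0 = 1 := by simp [g, w_zero]

lemma g_eq_zero (Q : ℝ) (a m j : ℕ) (ha : a ≤ m) (h : m < j) : g Q a m j = 0 := by
  have : w a (m - a) j = 0 := w_eq_zero _ _ _ (by omega)
  simp [g, this]

lemma g_rec (Q : ℝ) (hQ : 0 < Q) (a m j : ℕ) (ha : a ≤ m) :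
    ((j:ℝ)+1) * g Q a m (j+1) + (if j = 0 then 0 else Q * (((m:ℝ) - j) + 1) * g Q a m (j-1))
      = Real.sqrt Q * ((a:ℝ) - ((m:ℝ) - a)) * g Q a m j := by
  have hs : Real.sqrt Q * Real.sqrt Q = Q := Real.mul_self_sqrt hQ.le
  have hb : ((m - a : ℕ) : ℝ) = (m:ℝ) - a := Nat.cast_sub ha
  cases j with
  | zero =>
    have hw := w_rec0 a (m-a)
    rw [hb] at hw
    simp only [g, pow_zero, pow_one, Nat.cast_zero, reduceIte]
    rw [hw]
    ring
  | succ i =>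
    rw [if_neg (Nat.succ_ne_zero i)]
    have hw := w_recS a (m-a) i
    rw [hb] at hw
    simp only [g, Nat.succ_sub_one]
    have key : Real.sqrt Q ^ (i+2) = Real.sqrt Q ^ i * Q := by
      rw [pow_succ, pow_succ, mul_assoc, hs]
    have key2 : Real.sqrt Q * Real.sqrt Q ^ (i+1) = Real.sqrt Q ^ i * Q := by
      rw [← pow_succ']
      exact key
    push_cast
    have h1 : (i:ℝ) + 1 + 1 = (i:ℝ) + 2 := by ring
    calc ((i:ℝ) + 1 + 1) * (Real.sqrt Q ^ (i + 1 + 1) * w a (m - a) (i + 1 + 1))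
          + Q * ((m:ℝ) - ((i:ℝ)+1) + 1) * (Real.sqrt Q ^ i * w a (m - a) i)
        = (Real.sqrt Q ^ i * Q) * (((i:ℝ) + 2) * w a (m-a) (i+2) + (((a:ℝ) + ((m:ℝ)-a)) - i) * w a (m-a) i) := by
          rw [show i + 1 + 1 = i + 2 from rfl, key]
          ring
      _ = (Real.sqrt Q ^ i * Q) * (((a:ℝ) - ((m:ℝ)-a)) * w a (m-a) (i+1)) := by rw [hw]
      _ = Real.sqrt Q * ((a:ℝ) - ((m:ℝ) - a)) * (Real.sqrt Q ^ (i + 1) * w a (m - a) (i + 1)) := by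
          rw [← mul_assoc, mul_comm (Real.sqrt Q) _]
          rw [show Real.sqrt Q ^ i * Q = Real.sqrt Q ^ (i+1) * Real.sqrt Q from by
            rw [pow_succ, mul_assoc, hs]]
          ring

/-- Eigenvector coefficient for eigenvector indexed by `α ≤ L`, at basis point `(σ, L-σ)`. -/
def coeffE (Q : ℝ) (α L σ : Multiset ℕ+) : ℝ :=
  ∏ k ∈ L.toFinset, g Q (α.count k) (L.count k) (σ.count k)

/-- The eigenvector of `MS Q` attached to a splitting `α ≤ L`. -/
def Evec (Q : ℝ) (α L : Multiset ℕ+) : FockP1 :=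
  ∑ σ ∈ L.powerset.toFinset, coeffE Q α L σ • Finsupp.single (σ, L - σ) (1 : ℝ)

lemma wt_add (μ ν : Multiset ℕ+) : wt (μ + ν) = wt μ + wt ν := by
  simp [wt]

lemma wt_sub_add (σ L : Multiset ℕ+) (h : σ ≤ L) : wt σ + wt (L - σ) = wt L := by
  rw [← wt_add]
  congr 1
  rw [add_comm]
  exact tsub_add_cancel_of_le h

lemma wt_mono {σ L : Multiset ℕ+} (h : σ ≤ L) : wt σ ≤ wt L := by
  obtain ⟨c, rfl⟩ := Multiset.le_iff_exists_add.mp h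
  rw [wt_add]
  exact Nat.le_add_right _ _

lemma wt_replicate (n : ℕ) : wt (Multiset.replicate n 1) = n := by
  simp [wt, Multiset.map_replicate]

def wtHom : Multiset ℕ+ →+ ℕ where
  toFun := wt
  map_zero' := by simp [wt]
  map_add' := wt_add

lemma wt_eq_sum (μ : Multiset ℕ+) (S : Finset ℕ+) (h : μ.toFinset ⊆ S) :
    wt μ = ∑ k ∈ S, μ.count k * (k : ℕ) := by
  conv_lhs => rw [show wt μ = wtHom μ from rfl, ← Multiset.toFinset_sum_count_nsmul_eq μ]
  rw [map_sum]
  rw [Finset.sum_subset h]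
  · apply Finset.sum_congr rfl
    intro k _
    have h1 : wtHom {k} = (k:ℕ) := by simp [wtHom, wt]
    rw [map_nsmul, h1, smul_eq_mul]
  · intro k _ hk
    have : μ.count k = 0 := by
      rw [Multiset.count_eq_zero]
      intro hmem
      exact hk (Multiset.mem_toFinset.mpr hmem)
    simp [this]

lemma coeffE_zero (Q : ℝ) (α L : Multiset ℕ+) : coeffE Q α L 0 = 1 := by
  unfold coeffE
  rw [Finset.prod_congr rfl (fun k _ => by rw [Multiset.count_zero, g_zero])]
  exact Finset.prod_const_one

lemma Evec_apply (Q : ℝ) (α L τ : Multiset ℕ+) (hτ : τ ≤ L) :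
    Evec Q α L (τ, L - τ) = coeffE Q α L τ := by
  classical
  unfold Evec
  rw [Finsupp.finset_sum_apply]
  have h1 : ∀ σ ∈ L.powerset.toFinset,
      (coeffE Q α L σ • Finsupp.single (σ, L - σ) (1:ℝ)) (τ, L - τ)
        = if σ = τ then coeffE Q α L σ else 0 := by
    intro σ hσ
    rw [Finsupp.smul_apply, Finsupp.single_apply]
    by_cases h : σ = τ
    · subst h; simp
    · rw [if_neg (fun hc => h (congrArg Prod.fst hc)), if_neg h]
      simp
  rw [Finset.sum_congr rfl h1, Finset.sum_ite_eq']
  rw [if_pos (by rw [Multiset.mem_toFinset, Multiset.mem_powerset]; exact hτ)]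

lemma Evec_ne_zero (Q : ℝ) (α L : Multiset ℕ+) : Evec Q α L ≠ 0 := by
  intro h
  have h0 := Evec_apply Q α L 0 (Multiset.zero_le L)
  rw [h, coeffE_zero] at h0
  simp only [Multiset.sub_zero] at h0
  rw [Finsupp.zero_apply] at h0
  exact zero_ne_one h0

lemma Evec_support (Q : ℝ) (α L : Multiset ℕ+) (x : Multiset ℕ+ × Multiset ℕ+)
    (hx : x ∈ (Evec Q α L).support) : wt x.1 + wt x.2 = wt L := by
  classical
  have hsub := Finsupp.support_finset_sum (s := L.powerset.toFinset)
    (f := fun σ => coeffE Q α L σ • Finsupp.single (σ, L - σ) (1:ℝ))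
  rw [show (∑ σ ∈ L.powerset.toFinset, coeffE Q α L σ • Finsupp.single (σ, L - σ) (1:ℝ)) = Evec Q α L from rfl] at hsub
  have hx2 := hsub hx
  rw [Finset.mem_biUnion] at hx2
  obtain ⟨σ, hσ, hxs⟩ := hx2
  have hσL : σ ≤ L := Multiset.mem_powerset.mp (Multiset.mem_toFinset.mp hσ)
  have : x ∈ (Finsupp.single (σ, L - σ) (1:ℝ)).support :=
    Finsupp.support_smul hxs
  rw [Finsupp.support_single_ne_zero _ one_ne_zero] at this
  rw [Finset.mem_singleton] at this
  subst this
  exact wt_sub_add σ L hσL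

lemma helperA {σ L : Multiset ℕ+} (k : ℕ+) (hk : k ∈ σ) (hσ : σ ≤ L) :
    k ::ₘ (L - σ) = L - σ.erase k := by
  have hc : ∀ j, σ.count j ≤ L.count j := fun j => Multiset.count_le_of_le j hσ
  have hk1 : 1 ≤ σ.count k := Multiset.one_le_count_iff_mem.mpr hk
  ext j
  by_cases hj : j = k
  · subst hj
    rw [Multiset.count_cons_self, Multiset.count_sub, Multiset.count_sub,
      Multiset.count_erase_self]
    have := hc j
    omega
  · rw [Multiset.count_cons_of_ne hj, Multiset.count_sub, Multiset.count_sub,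
      Multiset.count_erase_of_ne hj]

lemma helperB1 {σ L : Multiset ℕ+} (k : ℕ+) (hk : k ∈ L - σ) (hσ : σ ≤ L) :
    k ::ₘ σ ≤ L := by
  have hc : ∀ j, σ.count j ≤ L.count j := fun j => Multiset.count_le_of_le j hσ
  have hk1 : 1 ≤ (L - σ).count k := Multiset.one_le_count_iff_mem.mpr hk
  rw [Multiset.count_sub] at hk1
  rw [Multiset.le_iff_count]
  intro j
  by_cases hj : j = k
  · subst hj
    rw [Multiset.count_cons_self]
    have := hc j
    omega
  · rw [Multiset.count_cons_of_ne hj]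
    exact hc j

lemma helperB2 {σ L : Multiset ℕ+} (k : ℕ+) (hk : k ∈ L - σ) (hσ : σ ≤ L) :
    (L - σ).erase k = L - (k ::ₘ σ) := by
  have hc : ∀ j, σ.count j ≤ L.count j := fun j => Multiset.count_le_of_le j hσ
  have hk1 : 1 ≤ (L - σ).count k := Multiset.one_le_count_iff_mem.mpr hk
  rw [Multiset.count_sub] at hk1
  ext j
  by_cases hj : j = k
  · subst hj
    rw [Multiset.count_erase_self, Multiset.count_sub, Multiset.count_sub,
      Multiset.count_cons_self]
    omega
  · rw [Multiset.count_erase_of_ne hj, Multiset.count_sub, Multiset.count_sub,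
      Multiset.count_cons_of_ne hj]

lemma MS_single (Q : ℝ) (x : Multiset ℕ+ × Multiset ℕ+) :
    MS Q (Finsupp.single x (1:ℝ)) = msStep Q x := by
  rw [MS, Finsupp.lift_apply, Finsupp.sum_single_index] <;> simp

lemma msStep_apply (Q : ℝ) (x y : Multiset ℕ+ × Multiset ℕ+) :
    msStep Q x y
      = (∑ k ∈ x.1.toFinset, ((k:ℕ):ℝ) * (x.1.count k) *
          (if (x.1.erase k, k ::ₘ x.2) = y then 1 else 0))
        + Q * ∑ k ∈ x.2.toFinset, ((k:ℕ):ℝ) * (x.2.count k) *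
          (if (k ::ₘ x.1, x.2.erase k) = y then 1 else 0) := by
  rw [msStep, Finsupp.add_apply, Finsupp.smul_apply, Finsupp.finset_sum_apply,
    Finsupp.finset_sum_apply]
  rw [smul_eq_mul]
  congr 1
  · apply Finset.sum_congr rfl
    intro k _
    rw [Finsupp.smul_apply, Finsupp.single_apply, smul_eq_mul]
  · congr 1
    apply Finset.sum_congr rfl
    intro k _
    rw [Finsupp.smul_apply, Finsupp.single_apply, smul_eq_mul]

lemma coeffE_factor (Q : ℝ) (α L σ : Multiset ℕ+) {k : ℕ+} (hk : k ∈ L.toFinset) :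
    coeffE Q α L σ = g Q (α.count k) (L.count k) (σ.count k) *
      ∏ k' ∈ L.toFinset.erase k, g Q (α.count k') (L.count k') (σ.count k') :=
  (Finset.mul_prod_erase _ _ hk).symm

lemma coeffE_cons (Q : ℝ) (α L τ : Multiset ℕ+) {k : ℕ+} (hk : k ∈ L.toFinset) :
    coeffE Q α L (k ::ₘ τ) = g Q (α.count k) (L.count k) (τ.count k + 1) *
      ∏ k' ∈ L.toFinset.erase k, g Q (α.count k') (L.count k') (τ.count k') := by
  rw [coeffE_factor Q α L _ hk, Multiset.count_cons_self]
  congr 1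
  apply Finset.prod_congr rfl
  intro k' hk'
  rw [Multiset.count_cons_of_ne (Finset.ne_of_mem_erase hk')]

lemma coeffE_erase (Q : ℝ) (α L τ : Multiset ℕ+) {k : ℕ+} (hk : k ∈ L.toFinset) :
    coeffE Q α L (τ.erase k) = g Q (α.count k) (L.count k) (τ.count k - 1) *
      ∏ k' ∈ L.toFinset.erase k, g Q (α.count k') (L.count k') (τ.count k') := by
  rw [coeffE_factor Q α L _ hk, Multiset.count_erase_self]
  congr 1
  apply Finset.prod_congr rfl
  intro k' hk'
  rw [Multiset.count_erase_of_ne (Finset.ne_of_mem_erase hk')]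

lemma msStep_pair_apply (Q : ℝ) (σ L : Multiset ℕ+) (y : Multiset ℕ+ × Multiset ℕ+) :
    msStep Q (σ, L - σ) y
      = (∑ k ∈ σ.toFinset, ((k:ℕ):ℝ) * (σ.count k) *
          (if (σ.erase k, k ::ₘ (L - σ)) = y then 1 else 0))
        + Q * ∑ k ∈ (L - σ).toFinset, ((k:ℕ):ℝ) * ((L - σ).count k) *
          (if (k ::ₘ σ, (L - σ).erase k) = y then 1 else 0) :=
  msStep_apply Q (σ, L - σ) y

/-- The main eigen-equation. -/
lemma eigen (Q : ℝ) (hQ : 0 < Q) (α L : Multiset ℕ+) (hα : α ≤ L) :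
    MS Q (Evec Q α L)
      = (Real.sqrt Q * ((wt α : ℝ) - (wt (L - α) : ℝ))) • Evec Q α L := by
  classical
  have hαc : ∀ j : ℕ+, α.count j ≤ L.count j := fun j => Multiset.count_le_of_le j hα
  have hL1 : MS Q (Evec Q α L)
      = ∑ σ ∈ L.powerset.toFinset, coeffE Q α L σ • msStep Q (σ, L - σ) := by
    unfold Evec
    rw [map_sum]
    simp only [map_smul, MS_single]
  rw [hL1]
  ext y
  rw [Finsupp.finset_sum_apply, Finsupp.smul_apply]
  simp only [Finsupp.smul_apply, smul_eq_mul]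
  by_cases hy : ∃ τ ≤ L, y = (τ, L - τ)
  · obtain ⟨τ, hτ, rfl⟩ := hy
    rw [Evec_apply Q α L τ hτ]
    have hτc : ∀ j : ℕ+, τ.count j ≤ L.count j := fun j => Multiset.count_le_of_le j hτ
    -- expand each msStep application and extend index sets to L.toFinset
    have hexp : ∀ σ ∈ L.powerset.toFinset,
        coeffE Q α L σ * msStep Q (σ, L - σ) (τ, L - τ)
          = (∑ k ∈ L.toFinset, coeffE Q α L σ * (((k:ℕ):ℝ) * (σ.count k) *
              (if (σ.erase k, k ::ₘ (L - σ)) = (τ, L - τ) then 1 else 0)))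
            + ∑ k ∈ L.toFinset, coeffE Q α L σ * (Q * (((k:ℕ):ℝ) * ((L - σ).count k) *
              (if (k ::ₘ σ, (L - σ).erase k) = (τ, L - τ) then 1 else 0))) := by
      intro σ hσ
      have hσL : σ ≤ L := Multiset.mem_powerset.mp (Multiset.mem_toFinset.mp hσ)
      rw [msStep_pair_apply]
      rw [mul_add]
      congr 1
      · rw [Finset.mul_sum]
        apply Finset.sum_subset
        · exact Multiset.toFinset_subset.mpr (Multiset.subset_of_le hσL)
        · intro k _ hk
          have h0 : σ.count k = 0 := by
            rw [Multiset.count_eq_zero]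
            exact fun hmem => hk (Multiset.mem_toFinset.mpr hmem)
          rw [h0]
          simp
      · have hsub2 : (L - σ).toFinset ⊆ L.toFinset :=
          Multiset.toFinset_subset.mpr (Multiset.subset_of_le (Multiset.sub_le_self L σ))
        rw [Finset.mul_sum, Finset.mul_sum]
        apply Finset.sum_subset hsub2
        intro k _ hk
        have h0 : (L - σ).count k = 0 := by
          rw [Multiset.count_eq_zero]
          exact fun hmem => hk (Multiset.mem_toFinset.mpr hmem)
        rw [h0]
        simp
    rw [Finset.sum_congr rfl hexp, Finset.sum_add_distrib, Finset.sum_comm, Finset.sum_comm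
      (s := L.powerset.toFinset)]
    -- collapse the σ-sums
    have hcolA : ∀ k ∈ L.toFinset,
        (∑ σ ∈ L.powerset.toFinset, coeffE Q α L σ * (((k:ℕ):ℝ) * (σ.count k) *
            (if (σ.erase k, k ::ₘ (L - σ)) = (τ, L - τ) then 1 else 0)))
          = ((k:ℕ):ℝ) * ((τ.count k : ℝ) + 1) * coeffE Q α L (k ::ₘ τ) := by
      intro k hkF
      have hpt : ∀ σ ∈ L.powerset.toFinset,
          coeffE Q α L σ * (((k:ℕ):ℝ) * (σ.count k) *
            (if (σ.erase k, k ::ₘ (L - σ)) = (τ, L - τ) then 1 else 0))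
          = if σ = k ::ₘ τ then coeffE Q α L σ * (((k:ℕ):ℝ) * (σ.count k)) else 0 := by
        intro σ hσ
        have hσL : σ ≤ L := Multiset.mem_powerset.mp (Multiset.mem_toFinset.mp hσ)
        by_cases hc : σ = k ::ₘ τ
        · subst hc
          rw [if_pos rfl, if_pos, mul_one]
          have h1 : (k ::ₘ τ).erase k = τ := Multiset.erase_cons_head k τ
          have h2 : k ::ₘ (L - (k ::ₘ τ)) = L - τ := by
            rw [helperA k (Multiset.mem_cons_self k τ) hσL, h1]
          rw [h1, h2]
        · rw [if_neg hc]
          by_cases hkσ : k ∈ σ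
          · rw [if_neg, mul_zero, mul_zero]
            intro hpair
            apply hc
            have h1 : σ.erase k = τ := congrArg Prod.fst hpair
            rw [← Multiset.cons_erase hkσ, h1]
          · have h0 : σ.count k = 0 := Multiset.count_eq_zero.mpr hkσ
            rw [h0]
            simp
      rw [Finset.sum_congr rfl hpt, Finset.sum_ite_eq']
      by_cases hkt : k ::ₘ τ ∈ L.powerset.toFinset
      · rw [if_pos hkt, Multiset.count_cons_self]
        push_cast
        ring
      · rw [if_neg hkt]
        have hLτ : L.count k ≤ τ.count k := by
          by_contra hlt
          apply hkt
          rw [Multiset.mem_toFinset, Multiset.mem_powerset, Multiset.le_iff_count]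
          intro j
          by_cases hj : j = k
          · subst hj
            rw [Multiset.count_cons_self]
            omega
          · rw [Multiset.count_cons_of_ne hj]
            exact hτc j
        rw [coeffE_cons Q α L τ hkF, g_eq_zero Q _ _ _ (hαc k) (by omega)]
        ring
    have hcolB : ∀ k ∈ L.toFinset,
        (∑ σ ∈ L.powerset.toFinset, coeffE Q α L σ * (Q * (((k:ℕ):ℝ) * ((L - σ).count k) *
            (if (k ::ₘ σ, (L - σ).erase k) = (τ, L - τ) then 1 else 0))))
          = if k ∈ τ then
              Q * (((k:ℕ):ℝ) * (((L.count k : ℝ) - (τ.count k : ℝ)) + 1)) * coeffE Q α L (τ.erase k)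
            else 0 := by
      intro k hkF
      by_cases hkτ : k ∈ τ
      · have hτ1 : 1 ≤ τ.count k := Multiset.one_le_count_iff_mem.mpr hkτ
        have herl : τ.erase k ≤ L := le_trans (Multiset.erase_le k τ) hτ
        have hpt : ∀ σ ∈ L.powerset.toFinset,
            coeffE Q α L σ * (Q * (((k:ℕ):ℝ) * ((L - σ).count k) *
              (if (k ::ₘ σ, (L - σ).erase k) = (τ, L - τ) then 1 else 0)))
            = if σ = τ.erase k then
                coeffE Q α L σ * (Q * (((k:ℕ):ℝ) * ((L - σ).count k))) else 0 := by
          intro σ hσ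
          have hσL : σ ≤ L := Multiset.mem_powerset.mp (Multiset.mem_toFinset.mp hσ)
          by_cases hc : σ = τ.erase k
          · subst hc
            rw [if_pos rfl, if_pos, mul_one]
            have hcons : k ::ₘ τ.erase k = τ := Multiset.cons_erase hkτ
            have hkmem : k ∈ L - τ.erase k := by
              rw [← Multiset.one_le_count_iff_mem, Multiset.count_sub,
                Multiset.count_erase_self]
              have := hτc k
              omega
            have h2 : (L - τ.erase k).erase k = L - τ := by
              rw [helperB2 k hkmem hσL, hcons]
            rw [hcons, h2]
          · rw [if_neg hc, if_neg, mul_zero, mul_zero, mul_zero]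
            intro hpair
            apply hc
            have h1 : k ::ₘ σ = τ := congrArg Prod.fst hpair
            rw [← h1, Multiset.erase_cons_head]
        rw [Finset.sum_congr rfl hpt, Finset.sum_ite_eq', if_pos
          (by rw [Multiset.mem_toFinset, Multiset.mem_powerset]; exact herl), if_pos hkτ]
        have hcnt : ((L - τ.erase k).count k : ℝ) = ((L.count k : ℝ) - (τ.count k : ℝ)) + 1 := by
          rw [Multiset.count_sub, Multiset.count_erase_self]
          have h3 := hτc k
          have h4 : L.count k - (τ.count k - 1) = L.count k - τ.count k + 1 := by omega
          rw [h4]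
          push_cast [Nat.cast_sub h3]
          ring
        rw [hcnt]
        ring
      · rw [if_neg hkτ]
        apply Finset.sum_eq_zero
        intro σ hσ
        rw [if_neg, mul_zero, mul_zero, mul_zero]
        intro hpair
        apply hkτ
        have h1 : k ::ₘ σ = τ := congrArg Prod.fst hpair
        rw [← h1]
        exact Multiset.mem_cons_self k σ
    rw [Finset.sum_congr rfl hcolA, Finset.sum_congr rfl hcolB, ← Finset.sum_add_distrib]
    -- per-mode recurrence
    have hper : ∀ k ∈ L.toFinset,
        ((k:ℕ):ℝ) * ((τ.count k : ℝ) + 1) * coeffE Q α L (k ::ₘ τ)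
          + (if k ∈ τ then
              Q * (((k:ℕ):ℝ) * (((L.count k : ℝ) - (τ.count k : ℝ)) + 1)) * coeffE Q α L (τ.erase k)
            else 0)
          = (Real.sqrt Q * (((α.count k : ℕ) : ℝ) - (((L.count k : ℕ) : ℝ)
              - ((α.count k : ℕ) : ℝ))) * ((k:ℕ):ℝ)) * coeffE Q α L τ := by
      intro k hkF
      have hak : α.count k ≤ L.count k := hαc k
      have hrec := g_rec Q hQ (α.count k) (L.count k) (τ.count k) hak
      rw [coeffE_cons Q α L τ hkF, coeffE_factor Q α L τ hkF]
      by_cases hkτ : k ∈ τ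
      · have hτ1 : 1 ≤ τ.count k := Multiset.one_le_count_iff_mem.mpr hkτ
        rw [if_pos hkτ, coeffE_erase Q α L τ hkF]
        rw [if_neg (by omega : ¬ τ.count k = 0)] at hrec
        linear_combination (((k:ℕ):ℝ) *
          ∏ k' ∈ L.toFinset.erase k, g Q (α.count k') (L.count k') (τ.count k')) * hrec
      · have hτ0 : τ.count k = 0 := Multiset.count_eq_zero.mpr hkτ
        rw [if_neg hkτ, add_zero, hτ0]
        rw [hτ0, if_pos rfl] at hrec
        push_cast at hrec ⊢
        linear_combination (((k:ℕ):ℝ) *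
          ∏ k' ∈ L.toFinset.erase k, g Q (α.count k') (L.count k') (τ.count k')) * hrec
    rw [Finset.sum_congr rfl hper, ← Finset.sum_mul]
    congr 1
    have hwα : (wt α : ℝ) = ∑ k ∈ L.toFinset, ((α.count k : ℕ) : ℝ) * ((k:ℕ):ℝ) := by
      rw [wt_eq_sum α L.toFinset (Multiset.toFinset_subset.mpr (Multiset.subset_of_le hα))]
      push_cast
      rfl
    have hwLα : (wt (L - α) : ℝ)
        = ∑ k ∈ L.toFinset, (((L.count k : ℕ) : ℝ) - ((α.count k : ℕ) : ℝ)) * ((k:ℕ):ℝ) := by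
      rw [wt_eq_sum (L - α) L.toFinset
        (Multiset.toFinset_subset.mpr (Multiset.subset_of_le (Multiset.sub_le_self L α)))]
      push_cast
      apply Finset.sum_congr rfl
      intro k _
      rw [Multiset.count_sub, Nat.cast_sub (hαc k)]
    rw [hwα, hwLα, ← Finset.sum_sub_distrib, Finset.mul_sum]
    apply Finset.sum_congr rfl
    intro k _
    ring
  · -- y is not of the admissible form: both sides vanish
    have hR : Evec Q α L y = 0 := by
      unfold Evec
      rw [Finsupp.finset_sum_apply]
      apply Finset.sum_eq_zero
      intro σ hσ
      have hσL : σ ≤ L := Multiset.mem_powerset.mp (Multiset.mem_toFinset.mp hσ)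
      rw [Finsupp.smul_apply, Finsupp.single_apply, if_neg, smul_zero]
      exact fun hc => hy ⟨σ, hσL, hc.symm⟩
    rw [hR, mul_zero]
    apply Finset.sum_eq_zero
    intro σ hσ
    have hσL : σ ≤ L := Multiset.mem_powerset.mp (Multiset.mem_toFinset.mp hσ)
    rw [msStep_pair_apply]
    have hA : (∑ k ∈ σ.toFinset, ((k:ℕ):ℝ) * (σ.count k) *
        (if (σ.erase k, k ::ₘ (L - σ)) = y then 1 else 0)) = 0 := by
      apply Finset.sum_eq_zero
      intro k hk
      rw [if_neg, mul_zero]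
      intro hc
      refine hy ⟨σ.erase k, le_trans (Multiset.erase_le k σ) hσL, ?_⟩
      rw [← hc, helperA k (Multiset.mem_toFinset.mp hk) hσL]
    have hB : (∑ k ∈ (L - σ).toFinset, ((k:ℕ):ℝ) * ((L - σ).count k) *
        (if (k ::ₘ σ, (L - σ).erase k) = y then 1 else 0)) = 0 := by
      apply Finset.sum_eq_zero
      intro k hk
      rw [if_neg, mul_zero]
      intro hc
      refine hy ⟨k ::ₘ σ, helperB1 k (Multiset.mem_toFinset.mp hk) hσL, ?_⟩
      rw [← hc, helperB2 k (Multiset.mem_toFinset.mp hk) hσL]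
    rw [hA, hB]
    simp

/-- Factorization of a sum over submultisets of a product over distinct parts. -/
lemma sum_powerset_prod (L : Multiset ℕ+) (f : ℕ+ → ℕ → ℝ) :
    ∑ σ ∈ L.powerset.toFinset, ∏ k ∈ L.toFinset, f k (σ.count k)
      = ∏ k ∈ L.toFinset, ∑ j ∈ Finset.range (L.count k + 1), f k j := by
  classical
  rw [Finset.prod_sum]
  have hcount : ∀ (p : ∀ k ∈ L.toFinset, ℕ) (k : ℕ+) (hk : k ∈ L.toFinset),
      (∑ x ∈ L.toFinset.attach, Multiset.replicate (p x.1 x.2) x.1).count k = p k hk := by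
    intro p k hk
    rw [Multiset.count_sum']
    rw [Finset.sum_eq_single_of_mem (⟨k, hk⟩ : {x // x ∈ L.toFinset}) (Finset.mem_attach _ _)]
    · rw [Multiset.count_replicate, if_pos rfl]
    · intro b _ hb
      rw [Multiset.count_replicate, if_neg]
      intro hbk
      exact hb (Subtype.ext hbk)
  apply Finset.sum_nbij' (i := fun σ => fun k _ => σ.count k)
    (j := fun p => ∑ x ∈ L.toFinset.attach, Multiset.replicate (p x.1 x.2) x.1)
  · intro σ hσ
    have hσL : σ ≤ L := Multiset.mem_powerset.mp (Multiset.mem_toFinset.mp hσ)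
    rw [Finset.mem_pi]
    intro k hk
    rw [Finset.mem_range]
    have := Multiset.count_le_of_le k hσL
    omega
  · intro p hp
    rw [Multiset.mem_toFinset, Multiset.mem_powerset, Multiset.le_iff_count]
    intro k
    by_cases hk : k ∈ L.toFinset
    · rw [hcount p k hk]
      have := (Finset.mem_pi.mp hp) k hk
      rw [Finset.mem_range] at this
      omega
    · have h0 : (∑ x ∈ L.toFinset.attach, Multiset.replicate (p x.1 x.2) x.1).count k = 0 := by
        rw [Multiset.count_sum']
        apply Finset.sum_eq_zero
        intro x _
        rw [Multiset.count_replicate, if_neg]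
        intro hxk
        exact hk (hxk ▸ x.2)
      rw [h0]
      exact Nat.zero_le _
  · intro σ hσ
    have hσL : σ ≤ L := Multiset.mem_powerset.mp (Multiset.mem_toFinset.mp hσ)
    ext k
    by_cases hk : k ∈ L.toFinset
    · exact hcount (fun k _ => σ.count k) k hk
    · rw [Multiset.count_sum']
      have h0 : ∑ x ∈ L.toFinset.attach,
          (Multiset.replicate (σ.count x.1) x.1).count k = 0 := by
        apply Finset.sum_eq_zero
        intro x _
        rw [Multiset.count_replicate, if_neg]
        intro hxk
        exact hk (hxk ▸ x.2)
      rw [h0, eq_comm, Multiset.count_eq_zero]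
      intro hmem
      exact hk (Multiset.mem_toFinset.mpr (Multiset.mem_of_le hσL hmem))
  · intro p hp
    funext k
    funext hk
    exact hcount p k hk
  · intro σ hσ
    rw [← Finset.prod_attach L.toFinset (fun k => f k (σ.count k))]

/-- Basis vectors lie in the span of the eigenvectors. -/
lemma single_mem_span (Q : ℝ) (hQ : 0 < Q) (L τ : Multiset ℕ+) (hτ : τ ≤ L) :
    Finsupp.single (τ, L - τ) (1 : ℝ)
      ∈ Submodule.span ℝ {x : FockP1 | ∃ α ≤ L, x = Evec Q α L} := by
  classical
  have hτc : ∀ j : ℕ+, τ.count j ≤ L.count j := fun j => Multiset.count_le_of_le j hτ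
  have hsq : Real.sqrt Q ≠ 0 := ne_of_gt (Real.sqrt_pos.mpr hQ)
  choose dd hdd using fun k : ℕ+ => exists_d (L.count k) (τ.count k) (hτc k)
  set D : Multiset ℕ+ → ℝ :=
    fun αm => ∏ k ∈ L.toFinset, ((Real.sqrt Q ^ τ.count k)⁻¹ * dd k (αm.count k)) with hD
  have key : ∑ αm ∈ L.powerset.toFinset, D αm • Evec Q αm L
      = Finsupp.single (τ, L - τ) (1:ℝ) := by
    have step1 : ∀ αm ∈ L.powerset.toFinset, D αm • Evec Q αm L
        = ∑ σ ∈ L.powerset.toFinset,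
            (D αm * coeffE Q αm L σ) • Finsupp.single (σ, L - σ) (1:ℝ) := by
      intro αm _
      unfold Evec
      rw [Finset.smul_sum]
      apply Finset.sum_congr rfl
      intro σ _
      rw [smul_smul]
    rw [Finset.sum_congr rfl step1, Finset.sum_comm]
    have inner : ∀ σ ∈ L.powerset.toFinset,
        (∑ αm ∈ L.powerset.toFinset,
          (D αm * coeffE Q αm L σ) • Finsupp.single (σ, L - σ) (1:ℝ))
        = (if σ = τ then (1:ℝ) else 0) • Finsupp.single (σ, L - σ) (1:ℝ) := by
      intro σ hσ
      have hσL : σ ≤ L := Multiset.mem_powerset.mp (Multiset.mem_toFinset.mp hσ)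
      rw [← Finset.sum_smul]
      congr 1
      have hfac : ∀ αm ∈ L.powerset.toFinset, D αm * coeffE Q αm L σ
          = ∏ k ∈ L.toFinset, (((Real.sqrt Q ^ τ.count k)⁻¹ * dd k (αm.count k)) *
              g Q (αm.count k) (L.count k) (σ.count k)) := by
        intro αm _
        rw [hD]
        unfold coeffE
        exact (Finset.prod_mul_distrib).symm
      rw [Finset.sum_congr rfl hfac,
        sum_powerset_prod L (fun k a => ((Real.sqrt Q ^ τ.count k)⁻¹ * dd k a) *
          g Q a (L.count k) (σ.count k))]
      have hmode : ∀ k ∈ L.toFinset,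
          (∑ a ∈ Finset.range (L.count k + 1), ((Real.sqrt Q ^ τ.count k)⁻¹ * dd k a) *
            g Q a (L.count k) (σ.count k))
          = if σ.count k = τ.count k then (1:ℝ) else 0 := by
        intro k _
        have hterm : ∀ a, ((Real.sqrt Q ^ τ.count k)⁻¹ * dd k a) *
            g Q a (L.count k) (σ.count k)
            = ((Real.sqrt Q ^ τ.count k)⁻¹ * Real.sqrt Q ^ σ.count k) *
              (dd k a * w a (L.count k - a) (σ.count k)) := by
          intro a
          rw [g]
          ring
        rw [Finset.sum_congr rfl (fun a _ => hterm a), ← Finset.mul_sum, hdd k (σ.count k)]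
        by_cases hc : σ.count k = τ.count k
        · rw [if_pos hc, hc, mul_one, inv_mul_cancel₀ (pow_ne_zero _ hsq)]
        · rw [if_neg hc, mul_zero]
      rw [Finset.prod_congr rfl hmode]
      by_cases hστ : σ = τ
      · subst hστ
        rw [if_pos rfl]
        apply Finset.prod_eq_one
        intro k _
        rw [if_pos rfl]
      · rw [if_neg hστ]
        have hex : ∃ k ∈ L.toFinset, σ.count k ≠ τ.count k := by
          by_contra hall
          push_neg at hall
          apply hστ
          ext j
          by_cases hj : j ∈ L.toFinset
          · exact hall j hj
          · have h1 : σ.count j = 0 := Multiset.count_eq_zero.mpr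
              (fun hm => hj (Multiset.mem_toFinset.mpr (Multiset.mem_of_le hσL hm)))
            have h2 : τ.count j = 0 := Multiset.count_eq_zero.mpr
              (fun hm => hj (Multiset.mem_toFinset.mpr (Multiset.mem_of_le hτ hm)))
            rw [h1, h2]
        obtain ⟨k, hk, hne⟩ := hex
        exact Finset.prod_eq_zero hk (if_neg hne)
    rw [Finset.sum_congr rfl inner]
    have hsplit : ∀ σ ∈ L.powerset.toFinset,
        (if σ = τ then (1:ℝ) else 0) • Finsupp.single (σ, L - σ) (1:ℝ)
          = if σ = τ then Finsupp.single (σ, L - σ) (1:ℝ) else 0 := by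
      intro σ _
      split <;> simp
    rw [Finset.sum_congr rfl hsplit, Finset.sum_ite_eq',
      if_pos (by rw [Multiset.mem_toFinset, Multiset.mem_powerset]; exact hτ)]
  rw [← key]
  apply Submodule.sum_mem
  intro αm hαm
  apply Submodule.smul_mem
  exact Submodule.subset_span
    ⟨αm, Multiset.mem_powerset.mp (Multiset.mem_toFinset.mp hαm), rfl⟩

end Stmt8Aux

/-- On the energy-`s` subspace of `ℱ[ℙ¹]` (spanned by the `|μ,ν⟩` with
`|μ|+|ν| = s`), the eigenvalues of `M_S(0,Q)` for `Q > 0` are exactly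
`(|μ|-|ν|)·√Q` over all pairs of partitions with `|μ|+|ν| = s`. -/
theorem stmt8 (s : ℕ) (Q : ℝ) (hQ : 0 < Q) :
    {lam : ℝ | ∃ v : FockP1, v ≠ 0 ∧
        (∀ x ∈ v.support, wt x.1 + wt x.2 = s) ∧ MS Q v = lam • v} =
      {lam : ℝ | ∃ μ ν : Multiset ℕ+, wt μ + wt ν = s ∧
        lam = ((wt μ : ℝ) - (wt ν : ℝ)) * Real.sqrt Q} := by
  classical
  ext lam
  simp only [Set.mem_setOf_eq]
  constructor
  · rintro ⟨v, hv0, hsupp, heig⟩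
    set P : Polynomial ℝ :=
      ∏ a ∈ Finset.range (s+1),
        (Polynomial.X - Polynomial.C ((2*(a:ℝ) - s) * Real.sqrt Q)) with hP
    have hkillE : ∀ (L α : Multiset ℕ+), α ≤ L → wt L = s →
        (Polynomial.aeval (MS Q)) P (Stmt8Aux.Evec Q α L) = 0 := by
      intro L α hαL hwL
      have hwa : wt α ≤ s := hwL ▸ Stmt8Aux.wt_mono hαL
      have hmem : wt α ∈ Finset.range (s+1) := Finset.mem_range.mpr (by omega)
      obtain ⟨R, hR⟩ := Finset.dvd_prod_of_mem
        (fun a : ℕ => Polynomial.X - Polynomial.C ((2*(a:ℝ) - s) * Real.sqrt Q)) hmem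
      rw [hP, hR, mul_comm, map_mul, Module.End.mul_apply]
      have heq : (Polynomial.aeval (MS Q))
          (Polynomial.X - Polynomial.C ((2*((wt α : ℕ):ℝ) - s) * Real.sqrt Q))
          (Stmt8Aux.Evec Q α L) = 0 := by
        rw [map_sub, LinearMap.sub_apply, Polynomial.aeval_X, Polynomial.aeval_C,
          Module.algebraMap_end_apply, Stmt8Aux.eigen Q hQ α L hαL]
        have hsum : wt α + wt (L - α) = s := by
          rw [Stmt8Aux.wt_sub_add α L hαL, hwL]
        have hcast : ((wt α : ℕ):ℝ) + ((wt (L - α) : ℕ):ℝ) = (s:ℝ) := by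
          exact_mod_cast congrArg (fun n : ℕ => (n:ℝ)) hsum
        have hsc : Real.sqrt Q * (((wt α : ℕ):ℝ) - ((wt (L - α) : ℕ):ℝ))
            = (2*((wt α : ℕ):ℝ) - s) * Real.sqrt Q := by
          have h2 : ((wt α : ℕ):ℝ) - ((wt (L - α) : ℕ):ℝ) = 2*((wt α : ℕ):ℝ) - s := by
            linarith
          rw [h2]
          ring
        rw [hsc]
        exact sub_self _
      rw [heq, map_zero]
    have hsingle : ∀ x ∈ v.support,
        (Polynomial.aeval (MS Q)) P (Finsupp.single x (1:ℝ)) = 0 := by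
      intro x hx
      have hE : wt x.1 + wt x.2 = s := hsupp x hx
      have hle : x.1 ≤ x.1 + x.2 := le_self_add
      have hsub : x.1 + x.2 - x.1 = x.2 := add_tsub_cancel_left x.1 x.2
      have hmem := Stmt8Aux.single_mem_span Q hQ (x.1 + x.2) x.1 hle
      rw [hsub] at hmem
      have hker : Submodule.span ℝ
          {y : FockP1 | ∃ α ≤ x.1 + x.2, y = Stmt8Aux.Evec Q α (x.1 + x.2)}
          ≤ LinearMap.ker ((Polynomial.aeval (MS Q)) P) := by
        rw [Submodule.span_le]
        rintro y ⟨α, hα, rfl⟩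
        rw [SetLike.mem_coe, LinearMap.mem_ker]
        apply hkillE _ _ hα
        rw [Stmt8Aux.wt_add]
        exact hE
      have := hker hmem
      rw [LinearMap.mem_ker] at this
      exact this
    have hPv : (Polynomial.aeval (MS Q)) P v = 0 := by
      conv_lhs => rw [← Finsupp.sum_single v, Finsupp.sum]
      rw [map_sum]
      apply Finset.sum_eq_zero
      intro x hx
      have h1 : Finsupp.single x (v x) = (v x) • Finsupp.single x (1:ℝ) := by
        rw [Finsupp.smul_single, smul_eq_mul, mul_one]
      rw [h1, map_smul, hsingle x hx, smul_zero]
    have hev : Module.End.HasEigenvector (MS Q) lam v :=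
      ⟨Module.End.mem_eigenspace_iff.mpr heig, hv0⟩
    have haev := Module.End.aeval_apply_of_hasEigenvector (p := P) hev
    rw [hPv] at haev
    have hPl : Polynomial.eval lam P = 0 := by
      rcases smul_eq_zero.mp haev.symm with h | h
      · exact h
      · exact absurd h hv0
    rw [hP, Polynomial.eval_prod] at hPl
    obtain ⟨a, ha, hfac⟩ := Finset.prod_eq_zero_iff.mp hPl
    rw [Polynomial.eval_sub, Polynomial.eval_X, Polynomial.eval_C, sub_eq_zero] at hfac
    have ha' : a ≤ s := by
      have := Finset.mem_range.mp ha
      omega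
    refine ⟨Multiset.replicate a 1, Multiset.replicate (s - a) 1, ?_, ?_⟩
    · rw [Stmt8Aux.wt_replicate, Stmt8Aux.wt_replicate]
      omega
    · rw [Stmt8Aux.wt_replicate, Stmt8Aux.wt_replicate, hfac]
      rw [Nat.cast_sub ha']
      ring
  · rintro ⟨μ, ν, hs, rfl⟩
    refine ⟨Stmt8Aux.Evec Q μ (μ + ν), Stmt8Aux.Evec_ne_zero Q μ (μ + ν), ?_, ?_⟩
    · intro x hx
      have h1 := Stmt8Aux.Evec_support Q μ (μ + ν) x hx
      rw [Stmt8Aux.wt_add] at h1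
      rw [h1, hs]
    · have h2 := Stmt8Aux.eigen Q hQ μ (μ + ν) le_self_add
      rw [add_tsub_cancel_left] at h2
      rw [h2, mul_comm]

end
end

section
/- Let A_n be the (n+1)×(n+1) matrix of Proposition 2 (superdiagonal n, n-1, ..., 1; subdiagonal Q, 2Q, ..., nQ). Then the characteristic polynomial of A_n is ∏_{j=0}^{n} (λ - (n-2j)√Q); in particular det(A_n) = 0 if n is even and det(A_n) = (-1)^{(n+1)/2} (n!!)² Q^{(n+1)/2} up to sign when n is odd, and tr(A_n²) = Q·Σ_{j=0}^n (n-2j)² = Q·n(n+1)(n+2)/3. -/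
open Polynomial


lemma sum_id_real (m : ℕ) : ∑ j ∈ Finset.range m, (j:ℝ) = m*(m-1)/2 := by
  induction m with
  | zero => simp
  | succ k ih => rw [Finset.sum_range_succ, ih]; push_cast; ring

lemma sum_sq_real (m : ℕ) : ∑ j ∈ Finset.range m, (j:ℝ)^2 = m*(m-1)*(2*m-1)/6 := by
  induction m with
  | zero => simp
  | succ k ih => rw [Finset.sum_range_succ, ih]; push_cast; ring

lemma prod_odd (m : ℕ) :
    ∏ j ∈ Finset.range (2*m+2), (((2*m+1:ℕ):ℝ) - 2*j) =
      (-1)^(m+1) * ((2*m+1).doubleFactorial : ℝ)^2 := by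
  induction m with
  | zero => norm_num [Finset.prod_range_succ, Nat.doubleFactorial]
  | succ k ih =>
    have h1 : 2*(k+1)+2 = (2*k+3) + 1 := by ring
    rw [h1, Finset.prod_range_succ, Finset.prod_range_succ']
    have h2 : ∀ j ∈ Finset.range (2*k+2),
        (((2*(k+1)+1:ℕ):ℝ) - 2*((j+1:ℕ):ℝ)) = (((2*k+1:ℕ):ℝ) - 2*j) := by
      intro j _; push_cast; ring
    rw [Finset.prod_congr rfl h2, ih]
    have h3 : (2*(k+1)+1).doubleFactorial = (2*k+3) * (2*k+1).doubleFactorial := by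
      show (2*k+3).doubleFactorial = _
      rfl
    rw [h3]
    push_cast
    ring

lemma derivId (a j : ℕ) :
    (1 - X^2) * derivative ((1+X)^a * ((1:ℝ[X])-X)^j) =
      (C ((a:ℝ) - (j:ℝ)) - C ((a:ℝ)+(j:ℝ)) * X) * ((1+X)^a * (1-X)^j) := by
  rw [derivative_mul, derivative_pow, derivative_pow]
  have d1 : derivative ((1:ℝ[X])+X) = 1 := by simp
  have d2 : derivative ((1:ℝ[X])-X) = -1 := by simp
  rw [d1, d2]
  rcases a with _ | a' <;> rcases j with _ | j' <;>
    simp only [Nat.cast_zero, pow_zero, Nat.cast_succ, Nat.succ_sub_one] <;>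
    push_cast <;> simp only [C_add, C_sub, C_neg, C_0, C_1] <;> ring

lemma coeffRecAux (a j i : ℕ) :
    (derivative ((1+X)^a * ((1:ℝ[X])-X)^j)).coeff i
      - (if 2 ≤ i then (derivative ((1+X)^a * ((1:ℝ[X])-X)^j)).coeff (i-2) else 0)
    = ((a:ℝ)-(j:ℝ)) * (((1+X)^a * ((1:ℝ[X])-X)^j).coeff i)
      - ((a:ℝ)+(j:ℝ)) * (if 1 ≤ i then ((1+X)^a * ((1:ℝ[X])-X)^j).coeff (i-1) else 0) := by
  have h := congrArg (fun q : ℝ[X] => q.coeff i) (derivId a j)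
  rw [show (1 - X^2) * derivative ((1+X)^a * ((1:ℝ[X])-X)^j)
      = derivative ((1+X)^a * ((1:ℝ[X])-X)^j) - derivative ((1+X)^a * ((1:ℝ[X])-X)^j) * X^2 by
        ring,
    show (C ((a:ℝ) - (j:ℝ)) - C ((a:ℝ)+(j:ℝ)) * X) * ((1+X)^a * ((1:ℝ[X])-X)^j)
      = C ((a:ℝ)-(j:ℝ)) * ((1+X)^a * ((1:ℝ[X])-X)^j)
        - C ((a:ℝ)+(j:ℝ)) * (((1+X)^a * ((1:ℝ[X])-X)^j) * X^1) by ring] at h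
  rw [coeff_sub, coeff_sub, coeff_C_mul, coeff_C_mul, coeff_mul_X_pow', coeff_mul_X_pow'] at h
  simpa using h

lemma coeffRec0 (a j : ℕ) :
    ((1+X)^a * ((1:ℝ[X])-X)^j).coeff 1 = ((a:ℝ)-(j:ℝ)) * ((1+X)^a * ((1:ℝ[X])-X)^j).coeff 0 := by
  have h := coeffRecAux a j 0
  rw [if_neg (by omega), if_neg (by omega)] at h
  rw [coeff_derivative] at h
  norm_num at h
  rw [mul_coeff_zero]
  linarith

lemma coeffRec (a j k : ℕ) :
    ((k:ℝ)+2) * (((1+X)^a * ((1:ℝ[X])-X)^j).coeff (k+2))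
      + ((a:ℝ)+(j:ℝ)-(k:ℝ)) * (((1+X)^a * ((1:ℝ[X])-X)^j).coeff k)
    = ((a:ℝ)-(j:ℝ)) * (((1+X)^a * ((1:ℝ[X])-X)^j).coeff (k+1)) := by
  rcases k with _ | k'
  · have h := coeffRecAux a j 1
    rw [if_neg (by omega), if_pos (by omega)] at h
    rw [coeff_derivative] at h
    norm_num at h
    rw [mul_coeff_zero]
    push_cast
    linarith
  · have h := coeffRecAux a j (k'+2)
    have h2 : (2:ℕ) ≤ k'+2 := by omega
    have h1 : (1:ℕ) ≤ k'+2 := by omega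
    rw [if_pos h2, if_pos h1] at h
    simp only [Nat.add_sub_cancel, coeff_derivative] at h
    have h3 : k' + 2 - 1 = k' + 1 := by omega
    rw [h3] at h
    push_cast at h ⊢
    linarith

lemma coeffTop (a j m : ℕ) (hm : a + j < m) : ((1+X)^a * ((1:ℝ[X])-X)^j).coeff m = 0 := by
  apply coeff_eq_zero_of_natDegree_lt
  apply lt_of_le_of_lt _ hm
  apply le_trans (natDegree_mul_le)
  have h1 : ((1:ℝ[X])+X).natDegree = 1 := by
    rw [add_comm]
    simpa using natDegree_X_add_C (1:ℝ)
  have h2 : ((1:ℝ[X])-X).natDegree = 1 := by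
    rw [show (1:ℝ[X]) - X = -(X - 1) by ring, natDegree_neg]
    simpa using natDegree_X_sub_C (1:ℝ)
  apply add_le_add
  · exact le_trans (natDegree_pow_le) (by rw [h1, mul_one])
  · exact le_trans (natDegree_pow_le) (by rw [h2, mul_one])

lemma coeffZero (a j : ℕ) : ((1+X)^a * ((1:ℝ[X])-X)^j).coeff 0 = 1 := by
  rw [coeff_zero_eq_eval_zero]
  simp

lemma charpolyEval {N : ℕ} (M : Matrix (Fin N) (Fin N) ℝ) (x : ℝ) :
    M.charpoly.eval x = (x • (1 : Matrix (Fin N) (Fin N) ℝ) - M).det := by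
  rw [Matrix.charpoly]
  have h := (evalRingHom x).map_det (Matrix.charmatrix M)
  rw [RingHom.mapMatrix_apply] at h
  rw [show ((Matrix.charmatrix M).det.eval x) = (evalRingHom x) (Matrix.charmatrix M).det from rfl, h]
  congr 1
  ext i k
  by_cases hik : i = k
  · subst hik
    simp [Matrix.charmatrix_apply_eq]
  · simp [Matrix.charmatrix_apply_ne _ _ _ hik, Matrix.one_apply_ne hik]

lemma sum_two (N a b : ℕ) (hab : a ≠ b) (f : ℕ → ℝ) (ca cb : ℝ) :
    ∑ l ∈ Finset.range N, (if l = a then ca else if l = b then cb else 0) * f l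
      = (if a < N then ca * f a else 0) + (if b < N then cb * f b else 0) := by
  have h : ∀ l ∈ Finset.range N,
      (if l = a then ca else if l = b then cb else 0) * f l
        = (if l = a then ca * f l else 0) + (if l = b then cb * f l else 0) := by
    intro l _
    by_cases h1 : l = a
    · subst h1; rw [if_pos rfl, if_pos rfl, if_neg (by omega)]; ring
    · by_cases h2 : l = b
      · subst h2; rw [if_neg h1, if_pos rfl, if_neg h1, if_pos rfl]; ring
      · rw [if_neg h1, if_neg h2, if_neg h1, if_neg h2]; ring
  rw [Finset.sum_congr rfl h, Finset.sum_add_distrib,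
    Finset.sum_ite_eq' (Finset.range N) a (fun l => ca * f l),
    Finset.sum_ite_eq' (Finset.range N) b (fun l => cb * f l)]
  simp [Finset.mem_range]

lemma exists_eigen (n : ℕ) (Q : ℝ) (hQ : 0 < Q)
    (A : Matrix (Fin (n + 1)) (Fin (n + 1)) ℝ)
    (hA : ∀ i j : Fin (n + 1),
      A i j =
        if (j : ℕ) = (i : ℕ) + 1 then (n : ℝ) - (i : ℕ)
        else if (i : ℕ) = (j : ℕ) + 1 then ((i : ℕ) : ℝ) * Q
        else 0)
    (j : ℕ) (hj : j ≤ n) :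
    ∃ v : Fin (n + 1) → ℝ, v ≠ 0 ∧
      A.mulVec v = (((n : ℝ) - 2 * j) * Real.sqrt Q) • v := by
  set q := Real.sqrt Q with hqdef
  have hq0 : 0 < q := Real.sqrt_pos.2 hQ
  have hq2 : q ^ 2 = Q := Real.sq_sqrt hQ.le
  set p : ℝ[X] := (1+X)^(n-j) * ((1:ℝ[X])-X)^j with hp
  set S : ℕ → ℝ := fun k => p.coeff k with hS
  have hnj : ((n - j : ℕ) : ℝ) = (n : ℝ) - j := by
    rw [Nat.cast_sub hj]
  have F1 : S 1 = ((n:ℝ) - 2*j) * S 0 := by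
    have h := coeffRec0 (n-j) j
    rw [hnj] at h
    rw [hS]; simp only [hp]
    rw [h]; ring_nf
  have F2 : ∀ k : ℕ, ((k:ℝ)+2) * S (k+2) + ((n:ℝ) - k) * S k = ((n:ℝ)-2*j) * S (k+1) := by
    intro k
    have h := coeffRec (n-j) j k
    rw [hnj, show (n:ℝ) - (j:ℝ) + (j:ℝ) - (k:ℝ) = (n:ℝ) - k by ring] at h
    rw [hS]; simp only [hp]
    rw [h]; ring_nf
  have Ftop : S (n+1) = 0 := by
    rw [hS]; simp only [hp]
    exact coeffTop _ _ _ (by omega)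
  have FS0 : S 0 = 1 := by rw [hS]; simp only [hp]; exact coeffZero _ _
  set w : ℕ → ℝ := fun k => q^k * S k / (n.choose k) with hw
  refine ⟨fun l => w (l : ℕ), ?_, ?_⟩
  · intro hv
    have h0 := congrFun hv ⟨0, by omega⟩
    simp only [hw] at h0
    rw [FS0] at h0
    simp at h0
  · funext i
    rw [Matrix.mulVec, dotProduct]
    simp only [hA, Pi.smul_apply, smul_eq_mul]
    rw [Fin.sum_univ_eq_sum_range
      (fun l => (if l = (i:ℕ) + 1 then (n : ℝ) - (i:ℕ)
        else if (i:ℕ) = l + 1 then ((i:ℕ) : ℝ) * Q else 0) * w l) (n+1)]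
    obtain ⟨i', hi'⟩ := i
    dsimp only
    rcases i' with _ | k
    · have hcong : ∀ l ∈ Finset.range (n+1),
          (if l = 0 + 1 then (n : ℝ) - ((0:ℕ):ℝ) else if (0:ℕ) = l + 1 then ((0:ℕ):ℝ) * Q else 0) * w l
          = (if l = 1 then (n:ℝ) else if l = n + 5 then 0 else 0) * w l := by
        intro l _
        congr 1
        split_ifs <;> first | norm_num | omega
      rw [Finset.sum_congr rfl hcong, sum_two (n+1) 1 (n+5) (by omega) w (n:ℝ) 0]
      simp only [zero_mul, ite_self]
      rcases Nat.eq_zero_or_pos n with hn | hn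
      · subst hn
        have hj0 : j = 0 := by omega
        subst hj0
        rw [if_neg (show ¬ (1 < 0 + 1) by omega)]
        norm_num
      · rw [if_pos (show 1 < n + 1 by omega)]
        simp only [hw]
        rw [F1, FS0, Nat.choose_one_right, Nat.choose_zero_right]
        have hn' : (n:ℝ) ≠ 0 := Nat.cast_ne_zero.2 (by omega)
        push_cast
        field_simp
        ring
    · have hcong : ∀ l ∈ Finset.range (n+1),
          (if l = (k+1) + 1 then (n : ℝ) - ((k+1:ℕ):ℝ) else if (k+1:ℕ) = l + 1 then ((k+1:ℕ):ℝ) * Q else 0) * w l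
          = (if l = k+2 then ((n:ℝ) - ((k+1:ℕ):ℝ)) else if l = k then ((k+1:ℕ):ℝ) * Q else 0) * w l := by
        intro l _
        congr 1
        split_ifs <;> first | rfl | omega
      rw [Finset.sum_congr rfl hcong,
        sum_two (n+1) (k+2) k (by omega) w ((n:ℝ) - ((k+1:ℕ):ℝ)) (((k+1:ℕ):ℝ) * Q)]
      rw [if_pos (show k < n + 1 by omega)]
      have hkn : k + 1 ≤ n := by omega
      have hC0 : ((n.choose k):ℝ) ≠ 0 := Nat.cast_ne_zero.2 (Nat.choose_pos (by omega)).ne'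
      have hC1 : ((n.choose (k+1)):ℝ) ≠ 0 := Nat.cast_ne_zero.2 (Nat.choose_pos hkn).ne'
      have c1' : ((n.choose (k+1)):ℝ) * ((k:ℝ)+1) = (n.choose k : ℝ) * ((n:ℝ) - k) := by
        have h := congrArg (fun m : ℕ => (m:ℝ)) (Nat.choose_succ_right_eq n k)
        push_cast [Nat.cast_sub (show k ≤ n by omega)] at h
        linarith
      by_cases hk2 : k + 2 ≤ n
      · rw [if_pos (show k + 2 < n + 1 by omega)]
        have hC2 : ((n.choose (k+2)):ℝ) ≠ 0 := Nat.cast_ne_zero.2 (Nat.choose_pos hk2).ne'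
        have c2' : ((n.choose (k+2)):ℝ) * ((k:ℝ)+2) = (n.choose (k+1) : ℝ) * ((n:ℝ) - ((k:ℝ)+1)) := by
          have h := congrArg (fun m : ℕ => (m:ℝ)) (Nat.choose_succ_right_eq n (k+1))
          push_cast [Nat.cast_sub hkn] at h
          linarith
        have key : ((n:ℝ)-((k:ℝ)+1)) * S (k+2) * (n.choose k : ℝ) * (n.choose (k+1) : ℝ)
            + ((k:ℝ)+1) * S k * (n.choose (k+1) : ℝ) * (n.choose (k+2) : ℝ)
            = ((n:ℝ)-2*j) * S (k+1) * (n.choose k : ℝ) * (n.choose (k+2) : ℝ) := by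
          linear_combination ((n.choose k : ℝ) * (n.choose (k+2) : ℝ)) * F2 k
            - (S (k+2) * (n.choose k : ℝ)) * c2'
            + (S k * (n.choose (k+2) : ℝ)) * c1'
        simp only [hw]
        rw [← hq2]
        push_cast
        simp only [← mul_div_assoc]
        rw [div_add_div _ _ hC2 hC0, div_eq_div_iff (mul_ne_zero hC2 hC0) hC1]
        linear_combination ((q:ℝ)^(k+2)) * key
      · rw [if_neg (show ¬ (k + 2 < n + 1) by omega)]
        have F2' := F2 k
        rw [show k + 2 = n + 1 by omega, Ftop] at F2'
        simp only [hw]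
        rw [← hq2]
        push_cast
        simp only [← mul_div_assoc]
        rw [zero_add, div_eq_div_iff hC0 hC1]
        linear_combination ((q:ℝ)^(k+2) * S k) * c1' + ((q:ℝ)^(k+2) * (n.choose k : ℝ)) * F2'

lemma sum_quad (m : ℕ) (a b c : ℝ) :
    ∑ i ∈ Finset.range m, (a + b*(i:ℝ) + c*(i:ℝ)^2)
      = m*a + b*((m:ℝ)*(m-1)/2) + c*((m:ℝ)*(m-1)*(2*m-1)/6) := by
  rw [Finset.sum_add_distrib, Finset.sum_add_distrib, ← Finset.mul_sum, ← Finset.mul_sum,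
    sum_id_real, sum_sq_real]
  simp only [Finset.sum_const, Finset.card_range, nsmul_eq_mul]
  try push_cast
  try ring

lemma traceAA (n : ℕ) (Q : ℝ)
    (A : Matrix (Fin (n + 1)) (Fin (n + 1)) ℝ)
    (hA : ∀ i j : Fin (n + 1),
      A i j =
        if (j : ℕ) = (i : ℕ) + 1 then (n : ℝ) - (i : ℕ)
        else if (i : ℕ) = (j : ℕ) + 1 then ((i : ℕ) : ℝ) * Q
        else 0) :
    Matrix.trace (A * A)
      = ∑ i ∈ Finset.range (n+1),
          (((n:ℝ) - i) * ((i:ℝ)+1) * Q + (i:ℝ) * Q * ((n:ℝ) - i + 1)) := by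
  rw [Matrix.trace]
  have hdiag : ∀ i : Fin (n+1), Matrix.diag (A * A) i
      = ((n:ℝ) - (i:ℕ)) * (((i:ℕ):ℝ)+1) * Q + ((i:ℕ):ℝ) * Q * ((n:ℝ) - (i:ℕ) + 1) := by
    intro i
    rw [Matrix.diag_apply, Matrix.mul_apply]
    have hterm : ∀ l : Fin (n+1), A i l * A l i
        = (if (l:ℕ) = (i:ℕ)+1 then ((n:ℝ) - (i:ℕ)) * ((((i:ℕ):ℝ)+1) * Q)
            else if (i:ℕ) = (l:ℕ)+1 then (((i:ℕ):ℝ) * Q) * ((n:ℝ) - (i:ℕ) + 1) else 0) := by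
      intro l
      by_cases h1 : (l:ℕ) = (i:ℕ)+1
      · have e1 : A i l = (n:ℝ) - (i:ℕ) := by rw [hA, if_pos h1]
        have e2 : A l i = ((l:ℕ):ℝ) * Q := by
          rw [hA, if_neg (show ¬((i:ℕ) = (l:ℕ)+1) by omega), if_pos h1]
        rw [e1, e2, if_pos h1]
        have hc : ((l:ℕ):ℝ) = ((i:ℕ):ℝ) + 1 := by exact_mod_cast congrArg (Nat.cast : ℕ → ℝ) h1
        linear_combination (((n:ℝ) - (i:ℕ)) * Q) * hc
      · by_cases h2 : (i:ℕ) = (l:ℕ)+1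
        · have e1 : A i l = ((i:ℕ):ℝ) * Q := by rw [hA, if_neg h1, if_pos h2]
          have e2 : A l i = (n:ℝ) - ((l:ℕ):ℝ) := by rw [hA, if_pos h2]
          rw [e1, e2, if_neg h1, if_pos h2]
          have hc : ((i:ℕ):ℝ) = ((l:ℕ):ℝ) + 1 := by exact_mod_cast congrArg (Nat.cast : ℕ → ℝ) h2
          linear_combination (((i:ℕ):ℝ) * Q) * hc
        · have e1 : A i l = 0 := by rw [hA, if_neg h1, if_neg h2]
          rw [e1, zero_mul, if_neg h1, if_neg h2]
    rw [Finset.sum_congr rfl (fun l _ => hterm l)]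
    rw [Fin.sum_univ_eq_sum_range
      (fun l => (if l = (i:ℕ)+1 then ((n:ℝ) - (i:ℕ)) * ((((i:ℕ):ℝ)+1) * Q)
            else if (i:ℕ) = l+1 then (((i:ℕ):ℝ) * Q) * ((n:ℝ) - (i:ℕ) + 1) else 0)) (n+1)]
    obtain ⟨i', hi'⟩ := i
    dsimp only
    rcases i' with _ | k
    · have hcong : ∀ l ∈ Finset.range (n+1),
          (if l = 0+1 then ((n:ℝ) - ((0:ℕ):ℝ)) * ((((0:ℕ):ℝ)+1) * Q)
            else if (0:ℕ) = l+1 then (((0:ℕ):ℝ) * Q) * ((n:ℝ) - ((0:ℕ):ℝ) + 1) else 0)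
          = (if l = 1 then (((n:ℝ) - ((0:ℕ):ℝ)) * ((((0:ℕ):ℝ)+1) * Q)) else if l = n+5 then 0 else 0) := by
        intro l _
        by_cases hl1 : l = 1
        · rw [if_pos (show l = 0+1 by omega), if_pos hl1]
        · rw [if_neg (show ¬(l = 0+1) by omega), if_neg (show ¬((0:ℕ) = l+1) by omega),
            if_neg hl1, ite_self]
      rw [Finset.sum_congr rfl hcong]
      have hst := sum_two (n+1) 1 (n+5) (by omega) (fun _ => 1)
        (((n:ℝ) - ((0:ℕ):ℝ)) * ((((0:ℕ):ℝ)+1) * Q)) 0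
      simp only [mul_one] at hst
      rw [hst, if_neg (show ¬ (n+5 < n+1) by omega)]
      rcases Nat.eq_zero_or_pos n with hn | hn
      · subst hn; norm_num
      · rw [if_pos (show 1 < n+1 by omega)]
        push_cast
        ring
    · have hcong : ∀ l ∈ Finset.range (n+1),
          (if l = (k+1)+1 then ((n:ℝ) - ((k+1:ℕ):ℝ)) * ((((k+1:ℕ):ℝ)+1) * Q)
            else if (k+1:ℕ) = l+1 then (((k+1:ℕ):ℝ) * Q) * ((n:ℝ) - ((k+1:ℕ):ℝ) + 1) else 0)
          = (if l = k+2 then (((n:ℝ) - ((k+1:ℕ):ℝ)) * ((((k+1:ℕ):ℝ)+1) * Q))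
              else if l = k then ((((k+1:ℕ):ℝ) * Q) * ((n:ℝ) - ((k+1:ℕ):ℝ) + 1)) else 0) := by
        intro l _
        by_cases ha : l = k+2
        · rw [if_pos (show l = (k+1)+1 by omega), if_pos ha]
        · rw [if_neg (show ¬(l = (k+1)+1) by omega), if_neg ha]
          by_cases hb : l = k
          · rw [if_pos (show (k+1:ℕ) = l+1 by omega), if_pos hb]
          · rw [if_neg (show ¬((k+1:ℕ) = l+1) by omega), if_neg hb]
      rw [Finset.sum_congr rfl hcong]
      have hst := sum_two (n+1) (k+2) k (by omega) (fun _ => 1)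
        (((n:ℝ) - ((k+1:ℕ):ℝ)) * ((((k+1:ℕ):ℝ)+1) * Q))
        ((((k+1:ℕ):ℝ) * Q) * ((n:ℝ) - ((k+1:ℕ):ℝ) + 1))
      simp only [mul_one] at hst
      rw [hst, if_pos (show k < n+1 by omega)]
      by_cases hk2 : k + 2 < n + 1
      · rw [if_pos hk2]; ring
      · rw [if_neg hk2]
        have hc : ((k+1:ℕ):ℝ) = (n:ℝ) := by
          exact_mod_cast congrArg (Nat.cast : ℕ → ℝ) (show k+1 = n by omega)
        rw [hc]
        ring
  rw [Finset.sum_congr rfl (fun i _ => hdiag i)]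
  rw [Fin.sum_univ_eq_sum_range
    (fun i => ((n:ℝ) - (i:ℕ)) * (((i:ℕ):ℝ)+1) * Q + ((i:ℕ):ℝ) * Q * ((n:ℝ) - (i:ℕ) + 1)) (n+1)]

/-- For the tridiagonal matrix `A_n` of Proposition 2 (superdiagonal
`n, …, 1`, subdiagonal `Q, 2Q, …, nQ`, `Q ≥ 0`), the characteristic polynomial
is `∏_{j=0}^{n} (λ - (n-2j)√Q)`; in particular `det A_n = 0` for `n` even,
`det A_n = (-1)^{(n+1)/2} (n‼)² Q^{(n+1)/2}` for `n` odd, and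
`tr(A_n²) = Q·Σ_j (n-2j)² = Q·n(n+1)(n+2)/3`. -/
theorem stmt17 (n : ℕ) (Q : ℝ) (hQ : 0 ≤ Q)
    (A : Matrix (Fin (n + 1)) (Fin (n + 1)) ℝ)
    (hA : ∀ i j : Fin (n + 1),
      A i j =
        if (j : ℕ) = (i : ℕ) + 1 then (n : ℝ) - (i : ℕ)
        else if (i : ℕ) = (j : ℕ) + 1 then ((i : ℕ) : ℝ) * Q
        else 0) :
    A.charpoly =
      ∏ j : Fin (n + 1), (X - C (((n : ℝ) - 2 * (j : ℕ)) * Real.sqrt Q)) ∧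
    (Even n → A.det = 0) ∧
    (Odd n → A.det =
      (-1 : ℝ) ^ ((n + 1) / 2) * ((Nat.doubleFactorial n : ℝ)) ^ 2 *
        Q ^ ((n + 1) / 2)) ∧
    Matrix.trace (A * A) =
      Q * ∑ j : Fin (n + 1), ((n : ℝ) - 2 * (j : ℕ)) ^ 2 ∧
    Matrix.trace (A * A) = Q * n * (n + 1) * (n + 2) / 3 := by
  have htrace : Matrix.trace (A * A) = Q * n * (n+1) * (n+2) / 3 := by
    rw [traceAA n Q A hA]
    have hcong : ∀ i ∈ Finset.range (n+1),
        (((n:ℝ) - i) * ((i:ℝ)+1) * Q + (i:ℝ) * Q * ((n:ℝ) - i + 1))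
          = ((n:ℝ)*Q + (2*(n:ℝ)*Q)*(i:ℝ) + (-2*Q)*(i:ℝ)^2) := by
      intro i _; push_cast; ring
    rw [Finset.sum_congr rfl hcong, sum_quad]
    push_cast
    ring
  have htrace2 : Q * ∑ j : Fin (n + 1), ((n : ℝ) - 2 * (j : ℕ)) ^ 2
      = Q * n * (n+1) * (n+2) / 3 := by
    rw [Fin.sum_univ_eq_sum_range (fun j => ((n:ℝ) - 2*(j:ℕ))^2) (n+1)]
    have hcong : ∀ i ∈ Finset.range (n+1), ((n:ℝ) - 2*((i:ℕ):ℝ))^2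
        = ((n:ℝ)^2 + (-4*(n:ℝ))*(i:ℝ) + 4*(i:ℝ)^2) := by
      intro i _; push_cast; ring
    rw [Finset.sum_congr rfl hcong, sum_quad]
    push_cast
    ring
  have hchar : A.charpoly
      = ∏ j : Fin (n + 1), (X - C (((n : ℝ) - 2 * (j : ℕ)) * Real.sqrt Q)) := by
    rcases eq_or_lt_of_le hQ with hQ0 | hQpos
    · -- Q = 0
      subst hQ0
      have hBT : (Matrix.charmatrix A).BlockTriangular id := by
        intro i j hij
        have hij' : (j:ℕ) < (i:ℕ) := hij
        have hne : i ≠ j := fun h => by subst h; exact lt_irrefl _ hij'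
        rw [Matrix.charmatrix_apply_ne _ _ _ hne, hA, if_neg (by omega)]
        by_cases h2 : (i:ℕ) = (j:ℕ)+1
        · rw [if_pos h2]; simp
        · rw [if_neg h2]; simp
      rw [Matrix.charpoly, Matrix.det_of_upperTriangular hBT]
      apply Finset.prod_congr rfl
      intro x _
      rw [Matrix.charmatrix_apply_eq, hA, if_neg (by omega), if_neg (by omega)]
      simp [Real.sqrt_zero]
    · -- Q > 0
      have hq0 : 0 < Real.sqrt Q := Real.sqrt_pos.2 hQpos
      set q := Real.sqrt Q with hq
      set f : Fin (n+1) → ℝ := fun j => ((n:ℝ) - 2*(j:ℕ)) * q with hf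
      have hinj : Function.Injective f := by
        intro a b hab
        simp only [hf] at hab
        have h1 := mul_right_cancel₀ (ne_of_gt hq0) hab
        have h2 : ((a:ℕ):ℝ) = ((b:ℕ):ℝ) := by linarith
        exact Fin.ext (Nat.cast_injective h2)
      have hroot : ∀ j : Fin (n+1), A.charpoly.eval (f j) = 0 := by
        intro j
        obtain ⟨v, hv0, hv⟩ := exists_eigen n Q hQpos A hA (j:ℕ) (Nat.lt_succ_iff.1 j.isLt)
        rw [charpolyEval]
        apply Matrix.exists_mulVec_eq_zero_iff.1
        refine ⟨v, hv0, ?_⟩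
        rw [Matrix.sub_mulVec, Matrix.smul_mulVec, Matrix.one_mulVec, hv]
        simp [hf, hq]
      have hmon := A.charpoly_monic
      have hne : A.charpoly ≠ 0 := hmon.ne_zero
      have hdeg : A.charpoly.natDegree = n+1 := by
        rw [Matrix.charpoly_natDegree_eq_dim, Fintype.card_fin]
      set s : Finset ℝ := Finset.univ.image f with hs
      have hcard : s.card = n+1 := by
        rw [hs, Finset.card_image_of_injective _ hinj, Finset.card_univ, Fintype.card_fin]
      have hsub : s.val ≤ A.charpoly.roots := by
        rw [Multiset.le_iff_count]
        intro x
        by_cases hx : x ∈ s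
        · rw [Multiset.count_eq_one_of_mem s.nodup hx]
          refine Multiset.one_le_count_iff_mem.2 ?_
          rw [Polynomial.mem_roots hne]
          obtain ⟨jj, _, rfl⟩ := Finset.mem_image.1 hx
          exact hroot jj
        · rw [Multiset.count_eq_zero_of_notMem hx]
          exact Nat.zero_le _
      have hcr : Multiset.card A.charpoly.roots ≤ n+1 :=
        (Polynomial.card_roots' _).trans (le_of_eq hdeg)
      have hvalcard : Multiset.card s.val = n+1 := hcard
      have heq : s.val = A.charpoly.roots :=
        Multiset.eq_of_le_of_card_le hsub (by rw [hvalcard]; exact hcr)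
      have hsplits : A.charpoly.Splits := by
        rw [Polynomial.splits_iff_card_roots, ← heq, hvalcard, hdeg]
      have hprod := Polynomial.Splits.eq_prod_roots_of_monic hsplits hmon
      rw [hprod, ← heq, ← Finset.prod_eq_multiset_prod,
        hs, Finset.prod_image (fun a _ b _ h => hinj h)]
  have hdetval : A.det = ∏ j : Fin (n+1), (((n:ℝ) - 2*(j:ℕ)) * Real.sqrt Q) := by
    have h := Matrix.det_eq_sign_charpoly_coeff A
    rw [hchar, Fintype.card_fin, Polynomial.coeff_zero_eq_eval_zero,
      Polynomial.eval_prod] at h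
    have he : ∀ j : Fin (n+1), ((X : ℝ[X]) - C (((n:ℝ)-2*(j:ℕ))*Real.sqrt Q)).eval 0
        = (-1) * (((n:ℝ)-2*(j:ℕ))*Real.sqrt Q) := by intro j; simp
    rw [Finset.prod_congr rfl (fun j _ => he j), Finset.prod_mul_distrib,
      Finset.prod_const, Finset.card_univ, Fintype.card_fin, ← mul_assoc] at h
    have hone : ((-1:ℝ))^(n+1) * ((-1:ℝ))^(n+1) = 1 := by
      rw [← pow_add]; exact Even.neg_one_pow ⟨n+1, by ring⟩
    rw [hone, one_mul] at h
    exact h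
  refine ⟨hchar, ?_, ?_, htrace.trans htrace2.symm, htrace⟩
  · intro hev
    obtain ⟨r, hr⟩ := hev
    rw [hdetval]
    apply Finset.prod_eq_zero (Finset.mem_univ (⟨r, by omega⟩ : Fin (n+1)))
    have hz : ((n:ℝ) - 2*(((⟨r, by omega⟩ : Fin (n+1)):ℕ):ℝ)) = 0 := by
      show (n:ℝ) - 2*(r:ℝ) = 0
      subst hr; push_cast; ring
    rw [hz, zero_mul]
  · intro hodd
    obtain ⟨m, hm⟩ := hodd
    rw [hdetval, Finset.prod_mul_distrib, Finset.prod_const, Finset.card_univ,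
      Fintype.card_fin,
      Fin.prod_univ_eq_prod_range (fun j => (n:ℝ) - 2*(j:ℕ)) (n+1)]
    subst hm
    rw [show 2*m+1+1 = 2*m+2 by omega, prod_odd m]
    have hdiv : (2*m+1+1)/2 = m+1 := by omega
    rw [hdiv]
    have hpow : (Real.sqrt Q)^(2*m+2) = Q^(m+1) := by
      rw [show 2*m+2 = 2*(m+1) by ring, pow_mul, Real.sq_sqrt hQ]
    rw [hpow]
end
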